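/- arXiv:2111.10802 — 5 statements merged into one kernel-verified Lean document; each statement's English description precedes it below -/
import Mathlib

section
/- Let 0 < r_7 < r_8 be reals, let (q_n) be positive integers with q_n → ∞, and let (ε_n) be arbitrary positive reals. Set s_n := r_8^{q_n}/(r_8^{q_n}+ε_n), X_n := {z ∈ ℂ : z^{q_n} ≠ ε_n and |z^{q_n}/(z^{q_n}−ε_n)| < s_n}, and Y_n := X_n ∖ {z : |z| ≤ r_7}. Then for every nonempty open set U ⊆ H(r_7, r_8), liminf_{n→∞} dens_U(Y_n) ≥ 1/2. -/
open Filter MeasureTheory Set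
open scoped ENNReal NNReal

noncomputable section
set_option maxHeartbeats 1000000

section AuxLemmas


/-- Rotation by a unit-modulus complex number is measure preserving. -/
lemma rotMP (a : ℂ) (ha : ‖a‖ = 1) :
    MeasurePreserving (fun z : ℂ => a * z) volume volume := by
  have ha' : a ∈ Metric.sphere (0:ℂ) 1 := by
    simp [mem_sphere_zero_iff_norm, ha]
  have h := (rotation (⟨a, ha'⟩ : Circle)).measurePreserving
  convert h using 1 <;> rfl

/-- Core algebraic inclusion lemma. -/
lemma mem_X {r8 ρ e : ℝ} (hr8 : 0 < r8) (hρ : 0 < ρ) (hρ8 : ρ < r8) (he : 0 < e)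
    {k : ℕ} (hk : 0 < k) {z : ℂ} (hz0 : z ≠ 0) (hzρ : ‖z‖ ≤ ρ)
    (hT : (z ^ k).re < -((ρ / r8) ^ k * ‖z ^ k‖)) :
    z ^ k ≠ (e : ℂ) ∧ ‖z ^ k / (z ^ k - e)‖ < r8 ^ k / (r8 ^ k + e) := by
  set w : ℂ := z ^ k with hw
  set A : ℝ := ‖w‖ with hA
  set δ : ℝ := (ρ / r8) ^ k with hδ
  set b : ℝ := r8 ^ k with hb
  have hw0 : w ≠ 0 := pow_ne_zero _ hz0
  have hApos : 0 < A := norm_pos_iff.mpr hw0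
  have hAρ : A ≤ ρ ^ k := by
    rw [hA, hw, norm_pow]
    exact pow_le_pow_left₀ (norm_nonneg z) hzρ k
  have hδpos : 0 < δ := pow_pos (div_pos hρ hr8) k
  have hbpos : 0 < b := pow_pos hr8 k
  have hδb : δ * b = ρ ^ k := by
    rw [hδ, hb, div_pow, div_mul_cancel₀]
    exact (pow_pos hr8 k).ne'
  have hρb : ρ ^ k < b := pow_lt_pow_left₀ hρ8 hρ.le hk.ne'
  have hxneg : w.re < 0 := hT.trans_le (by nlinarith)
  have hne : w ≠ (e : ℂ) := by
    intro h
    rw [h, Complex.ofReal_re] at hxneg; linarith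
  refine ⟨hne, ?_⟩
  have hsub0 : w - e ≠ 0 := sub_ne_zero.mpr hne
  rw [norm_div, div_lt_div_iff₀ (norm_pos_iff.mpr hsub0) (by positivity)]
  have habs2 : (‖w - e‖) ^ 2 = (w.re - e) ^ 2 + w.im ^ 2 := by
    rw [Complex.sq_norm, Complex.normSq_apply, Complex.sub_re, Complex.sub_im,
      Complex.ofReal_re, Complex.ofReal_im, sub_zero]
    ring
  have hA2 : A ^ 2 = w.re ^ 2 + w.im ^ 2 := by
    rw [hA, Complex.sq_norm, Complex.normSq_apply]; ring
  have hAδb : A ≤ δ * b := by rw [hδb]; exact hAρ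
  have hAb : A < b := hAρ.trans_lt hρb
  have h1 : 2 * b ^ 2 * e * (δ * A) < -(2 * b ^ 2 * e * w.re) := by
    have h0 : δ * A < -w.re := by linarith
    nlinarith [mul_lt_mul_of_pos_left h0 (show (0:ℝ) < 2 * b ^ 2 * e by positivity)]
  have hAA : A * A ≤ (δ * b) * A := mul_le_mul_of_nonneg_right hAδb hApos.le
  have h2 : 2 * b * e * A ^ 2 ≤ 2 * b ^ 2 * e * (δ * A) := by
    nlinarith [mul_le_mul_of_nonneg_left hAA (show (0:ℝ) ≤ 2 * b * e by positivity)]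
  have h3 : A ^ 2 * e ^ 2 < b ^ 2 * e ^ 2 := by
    have : A * A < b * b := mul_self_lt_mul_self hApos.le hAb
    nlinarith [mul_lt_mul_of_pos_right this (show (0:ℝ) < e^2 by positivity)]
  have hA2b : b ^ 2 * A ^ 2 = b ^ 2 * w.re ^ 2 + b ^ 2 * w.im ^ 2 := by rw [hA2]; ring
  have hrhs : (‖w - e‖ * b) ^ 2 = b ^ 2 * (w.re - e) ^ 2 + b ^ 2 * w.im ^ 2 := by
    rw [mul_pow, habs2]; ring
  have key : (A * (b + e)) ^ 2 < (‖w - e‖ * b) ^ 2 := by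
    nlinarith [h1, h2, h3, hA2b, hrhs]
  have := lt_of_pow_lt_pow_left₀ 2 (by positivity : (0:ℝ) ≤ ‖w - e‖ * b) key
  linarith [this]

/-- Real two-direction contradiction lemma. -/
lemma no_two {x y A δ c s : ℝ} (hA : 0 < A) (hδ : 0 ≤ δ)
    (hxy : x ^ 2 + y ^ 2 = A ^ 2) (hcs : c ^ 2 + s ^ 2 = 1)
    (h1 : |x| ≤ δ * A) (h2 : |c * x + s * y| ≤ δ * A)
    (hs : 2 * δ < |s| * Real.sqrt (1 - δ ^ 2)) : False := by
  set t : ℝ := Real.sqrt (1 - δ ^ 2) with ht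
  have htpos : 0 < t := by
    rcases le_or_gt t 0 with h | h
    · nlinarith [mul_nonneg (abs_nonneg s) (neg_nonneg.mpr h)]
    · exact h
  have hδ1 : 0 < 1 - δ ^ 2 := Real.sqrt_pos.mp htpos
  have ht2 : t ^ 2 = 1 - δ ^ 2 := Real.sq_sqrt hδ1.le
  have h4 : |s * y| ≤ |c * x + s * y| + |c * x| := by
    have h := abs_add_le (c * x + s * y) (-(c * x))
    rw [abs_neg] at h
    have hrw : c * x + s * y + -(c * x) = s * y := by ring
    rwa [hrw] at h
  have hc1 : |c| ≤ 1 := by nlinarith [sq_nonneg s, _root_.sq_abs c, abs_nonneg c]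
  have hcx : |c * x| ≤ δ * A := by
    rw [abs_mul]
    calc |c| * |x| ≤ 1 * |x| := mul_le_mul_of_nonneg_right hc1 (abs_nonneg x)
      _ = |x| := one_mul _
      _ ≤ δ * A := h1
  have hsy : |s| * |y| ≤ 2 * δ * A := by
    rw [← abs_mul]; linarith
  have h1' : x ^ 2 ≤ δ ^ 2 * A ^ 2 := by
    nlinarith [_root_.sq_abs x, mul_self_le_mul_self (abs_nonneg x) h1]
  have hy : t * A ≤ |y| := by
    rw [← Real.sqrt_sq (by positivity : (0:ℝ) ≤ t * A), ← Real.sqrt_sq (abs_nonneg y)]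
    exact Real.sqrt_le_sqrt (by nlinarith [_root_.sq_abs y])
  nlinarith [mul_le_mul_of_nonneg_left hy (abs_nonneg s),
    mul_lt_mul_of_pos_right hs hA]

/-- Monotonicity bound for sin on an interval around π/2. -/
lemma sin_lower {a x : ℝ} (ha : 0 < a) (ha2 : a ≤ Real.pi / 2)
    (hax : a ≤ x) (hxa : x ≤ Real.pi - a) : Real.sin a ≤ Real.sin x := by
  rcases le_total x (Real.pi / 2) with h | h
  · exact Real.sin_le_sin_of_le_of_le_pi_div_two (by linarith) h hax
  · rw [← Real.sin_pi_sub x]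
    exact Real.sin_le_sin_of_le_of_le_pi_div_two (by linarith) (by linarith) (by linarith)

end AuxLemmas

/-- `dens U X = area(U ∩ X) / area(U)`. -/
def dens (U X : Set ℂ) : ℝ := (volume (U ∩ X)).toReal / (volume U).toReal

/-- Let `0 < r_7 < r_8`, `(q_n)` positive integers with `q_n → ∞`, `(ε_n)`
arbitrary positive reals, `s_n = r_8^{q_n}/(r_8^{q_n}+ε_n)`,
`X_n = {z : z^{q_n} ≠ ε_n, |z^{q_n}/(z^{q_n}−ε_n)| < s_n}` and `Y_n = X_n ∖ {|z| ≤ r_7}`.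
Then for every nonempty open `U ⊆ H(r_7, r_8)`, `liminf dens_U(Y_n) ≥ 1/2`. -/
theorem statement7 (r7 r8 : ℝ) (h7 : 0 < r7) (h78 : r7 < r8)
    (q : ℕ → ℕ) (hq : ∀ n, 0 < q n) (hqtop : Tendsto q atTop atTop)
    (ε : ℕ → ℝ) (hε : ∀ n, 0 < ε n)
    (U : Set ℂ) (hUopen : IsOpen U) (hUne : U.Nonempty)
    (hUsub : U ⊆ {z : ℂ | r7 < ‖z‖ ∧ ‖z‖ < r8}) :
    (1 : ℝ) / 2 ≤ Filter.liminf
      (fun n => dens U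
        ({z : ℂ | z ^ q n ≠ (ε n : ℂ) ∧
            ‖z ^ q n / (z ^ q n - (ε n : ℂ))‖ < r8 ^ q n / (r8 ^ q n + ε n)} \
          {z : ℂ | ‖z‖ ≤ r7}))
      Filter.atTop := by
  classical
  have hr8pos : 0 < r8 := h7.trans h78
  set Y : ℕ → Set ℂ := fun n =>
    ({z : ℂ | z ^ q n ≠ (ε n : ℂ) ∧
        ‖z ^ q n / (z ^ q n - (ε n : ℂ))‖ < r8 ^ q n / (r8 ^ q n + ε n)} \
      {z : ℂ | ‖z‖ ≤ r7}) with hYdef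
  show (1:ℝ)/2 ≤ liminf (fun n => dens U (Y n)) atTop
  have hUball : U ⊆ Metric.ball (0:ℂ) r8 := by
    intro z hz
    rw [Metric.mem_ball, Complex.dist_eq, sub_zero]
    exact (hUsub hz).2
  have hUmeas : MeasurableSet U := hUopen.measurableSet
  have hUfin : volume U ≠ ⊤ := ((measure_mono hUball).trans_lt measure_ball_lt_top).ne
  have hUpos : 0 < volume U := hUopen.measure_pos volume hUne
  set VU : ℝ := (volume U).toReal with hVUdef
  have hVUpos : 0 < VU := ENNReal.toReal_pos hUpos.ne' hUfin
  have hdens_le : ∀ n, dens U (Y n) ≤ 1 := by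
    intro n
    simp only [dens]
    rw [← hVUdef, div_le_one hVUpos, hVUdef]
    exact ENNReal.toReal_mono hUfin (measure_mono inter_subset_left)
  have key : ∀ η : ℝ, 0 < η → η < VU / 2 →
      ∀ᶠ n in atTop, 1 / 2 - 3 * η / (2 * VU) ≤ dens U (Y n) := by
    intro η hη hηVU
    -- compact approximation
    obtain ⟨K, hKU, hKc, hKlt⟩ := hUmeas.exists_isCompact_lt_add hUfin
        (show ENNReal.ofReal η ≠ 0 by simp [ENNReal.ofReal_pos.mpr hη, (ENNReal.ofReal_pos.mpr hη).ne'])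
    have hKmeas : MeasurableSet K := hKc.measurableSet
    have hKfin : volume K ≠ ⊤ := ((measure_mono hKU).trans_lt hUfin.lt_top).ne
    have hUKle : volume (U \ K) ≤ ENNReal.ofReal η :=
      (measure_diff_lt_of_lt_add hKmeas.nullMeasurableSet hKU hKfin hKlt).le
    have hKne : K.Nonempty := by
      rcases K.eq_empty_or_nonempty with h | h
      · exfalso
        rw [h] at hKlt
        simp only [measure_empty, zero_add] at hKlt
        have h1 : volume U ≤ ENNReal.ofReal (VU / 2) :=
          le_trans hKlt.le (ENNReal.ofReal_le_ofReal (by linarith))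
        have h2 : volume U = ENNReal.ofReal VU := (ENNReal.ofReal_toReal hUfin).symm
        rw [h2, ENNReal.ofReal_le_ofReal_iff (by linarith)] at h1
        linarith
      · exact h
    obtain ⟨z0, hz0K, hz0max⟩ := hKc.exists_isMaxOn hKne continuous_norm.continuousOn
    set ρ : ℝ := ‖z0‖ with hρdef
    have hρ8 : ρ < r8 := (hUsub (hKU hz0K)).2
    have hρpos : 0 < ρ := h7.trans (hUsub (hKU hz0K)).1
    have hKρ : ∀ z ∈ K, ‖z‖ ≤ ρ := fun z hz => hz0max hz
    obtain ⟨d, hdpos, hdsub⟩ := hKc.exists_thickening_subset_open hUopen hKU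
    -- choose M
    obtain ⟨m0, hm0⟩ := exists_nat_ge ((volume (Metric.ball (0:ℂ) r8)).toReal / η)
    set M : ℕ := m0 + 2 with hMdef
    have hM2 : 2 ≤ M := by omega
    have hM2' : (2:ℝ) ≤ (M:ℝ) := by exact_mod_cast hM2
    have hMpos : (0:ℝ) < (M:ℝ) := by linarith
    have hballM : volume (Metric.ball (0:ℂ) r8) ≤ (M : ℝ≥0∞) * ENNReal.ofReal η := by
      have h1 : (volume (Metric.ball (0:ℂ) r8)).toReal ≤ (M:ℝ) * η := by
        have h2 : ((volume (Metric.ball (0:ℂ) r8)).toReal / η) ≤ (M:ℝ) := by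
          refine le_trans hm0 ?_
          push_cast [hMdef]; linarith
        calc (volume (Metric.ball (0:ℂ) r8)).toReal
            = ((volume (Metric.ball (0:ℂ) r8)).toReal / η) * η := by field_simp
          _ ≤ (M:ℝ) * η := mul_le_mul_of_nonneg_right h2 hη.le
      calc volume (Metric.ball (0:ℂ) r8)
          = ENNReal.ofReal ((volume (Metric.ball (0:ℂ) r8)).toReal) :=
            (ENNReal.ofReal_toReal measure_ball_lt_top.ne).symm
        _ ≤ ENNReal.ofReal ((M:ℝ) * η) := ENNReal.ofReal_le_ofReal h1
        _ = (M : ℝ≥0∞) * ENNReal.ofReal η := by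
            rw [ENNReal.ofReal_mul (by positivity), ENNReal.ofReal_natCast]
    have hsinpos : 0 < Real.sin (Real.pi / M) :=
      Real.sin_pos_of_pos_of_lt_pi (by positivity) (div_lt_self Real.pi_pos (by linarith))
    -- eventual facts
    have htend : Tendsto (fun n => (ρ / r8) ^ q n) atTop (nhds 0) :=
      (tendsto_pow_atTop_nhds_zero_of_lt_one (by positivity)
        ((div_lt_one hr8pos).mpr hρ8)).comp hqtop
    have hminpos : 0 < min (1/2 : ℝ) (Real.sin (Real.pi / M) / 4) := by
      apply lt_min (by norm_num) (by linarith)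
    have hev1 : ∀ᶠ n in atTop,
        (ρ / r8) ^ q n < min (1/2 : ℝ) (Real.sin (Real.pi / M) / 4) :=
      htend.eventually_lt_const hminpos
    have hnattend : Tendsto (fun n => ((q n : ℝ))) atTop atTop :=
      tendsto_natCast_atTop_atTop.comp hqtop
    have hangle : Tendsto (fun n => Real.pi / (q n : ℝ)) atTop (nhds 0) :=
      Tendsto.div_atTop tendsto_const_nhds hnattend
    have hφ : Continuous fun x : ℝ =>
        ‖Complex.exp ((x:ℂ) * Complex.I) - 1‖ * r8 := by
      apply Continuous.mul _ continuous_const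
      exact continuous_norm.comp
        ((Complex.continuous_exp.comp (Complex.continuous_ofReal.mul continuous_const)).sub
          continuous_const)
    have hztend : Tendsto (fun n =>
        ‖Complex.exp (Complex.ofReal (Real.pi / (q n : ℝ)) * Complex.I) - 1‖ * r8)
        atTop (nhds 0) := by
      have h := (hφ.tendsto 0).comp hangle
      simp only [Function.comp_def] at h
      have h0 : ‖Complex.exp (((0:ℝ):ℂ) * Complex.I) - 1‖ * r8 = 0 := by simp
      rw [h0] at h
      exact h
    have hev2 : ∀ᶠ n in atTop,
        ‖Complex.exp (Complex.ofReal (Real.pi / (q n : ℝ)) * Complex.I) - 1‖ * r8 < d :=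
      hztend.eventually_lt_const hdpos
    filter_upwards [hev1, hev2] with n hn1 hn2
    set k := q n with hkdef
    have hk1 : 0 < k := hq n
    set δ : ℝ := (ρ / r8) ^ k with hδdef
    have hδpos : 0 < δ := by positivity
    have hδhalf : δ < 1/2 := lt_of_lt_of_le hn1 (min_le_left _ _)
    have hδsin : δ < Real.sin (Real.pi / M) / 4 := lt_of_lt_of_le hn1 (min_le_right _ _)
    set T : Set ℂ := {z | (z ^ k).re < -(δ * ‖z ^ k‖)} with hTdef
    set Tp : Set ℂ := {z | δ * ‖z ^ k‖ < (z ^ k).re} with hTpdef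
    set E : Set ℂ := {z | |(z ^ k).re| ≤ δ * ‖z ^ k‖} with hEdef
    have hcontre : Continuous fun z : ℂ => (z ^ k).re :=
      Complex.continuous_re.comp (continuous_pow k)
    have hcontabs : Continuous fun z : ℂ => δ * ‖z ^ k‖ :=
      continuous_const.mul (continuous_norm.comp (continuous_pow k))
    have hTmeas : MeasurableSet T :=
      measurableSet_lt hcontre.measurable hcontabs.neg.measurable
    have hEmeas : MeasurableSet E :=
      measurableSet_le hcontre.abs.measurable hcontabs.measurable
    -- step A
    have hKT_sub : K ∩ T ⊆ U ∩ Y n := by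
      rintro z ⟨hzK, hzT⟩
      have hzU : z ∈ U := hKU hzK
      have h7z : r7 < ‖z‖ := (hUsub hzU).1
      have hz0 : z ≠ 0 := by
        intro h
        rw [h] at h7z
        simp only [norm_zero] at h7z
        linarith
      have hzT' : (z ^ k).re < -((ρ / r8) ^ k * ‖z ^ k‖) := by
        have := hzT
        rw [hTdef, mem_setOf_eq, hδdef] at this
        exact this
      refine ⟨hzU, mem_X hr8pos hρpos hρ8 (hε n) hk1 hz0 (hKρ z hzK) hzT', ?_⟩
      simp only [mem_setOf_eq, not_le]
      exact h7z
    have hstepA : volume (K ∩ T) ≤ volume (U ∩ Y n) := measure_mono hKT_sub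
    -- step B
    have hcover : K ⊆ (K ∩ T) ∪ (K ∩ Tp) ∪ (K ∩ E) := by
      intro z hz
      rcases lt_or_ge ((z ^ k).re) (-(δ * ‖z ^ k‖)) with h | h
      · exact Or.inl (Or.inl ⟨hz, h⟩)
      rcases lt_or_ge (δ * ‖z ^ k‖) ((z ^ k).re) with h' | h'
      · exact Or.inl (Or.inr ⟨hz, h'⟩)
      · exact Or.inr ⟨hz, abs_le.mpr ⟨by linarith, h'⟩⟩
    have hstepB : volume K ≤ volume (K ∩ T) + volume (K ∩ Tp) + volume (K ∩ E) :=
      (measure_mono hcover).trans <| (measure_union_le _ _).trans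
        (add_le_add_left (measure_union_le _ _) _)
    -- step C
    set ζ : ℂ := Complex.exp (Complex.ofReal (Real.pi / (k : ℝ)) * Complex.I) with hζdef
    have hζabs : ‖ζ‖ = 1 := Complex.norm_exp_ofReal_mul_I (Real.pi / (k:ℝ))
    have hζk : ζ ^ k = -1 := by
      rw [hζdef, ← Complex.exp_nat_mul]
      have hcast : (k:ℂ) ≠ 0 := by
        exact_mod_cast (Nat.cast_ne_zero (R := ℂ)).mpr hk1.ne'
      have : (k:ℂ) * (Complex.ofReal (Real.pi / (k : ℝ)) * Complex.I) = (Real.pi : ℂ) * Complex.I := by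
        push_cast
        field_simp
      rw [this, Complex.exp_pi_mul_I]
    have hζK : ∀ z ∈ K, ζ * z ∈ U := by
      intro z hz
      apply hdsub
      rw [Metric.mem_thickening_iff]
      refine ⟨z, hz, ?_⟩
      rw [Complex.dist_eq]
      have hrw : ζ * z - z = (ζ - 1) * z := by ring
      rw [hrw, norm_mul]
      calc ‖ζ - 1‖ * ‖z‖
          ≤ ‖ζ - 1‖ * r8 := by
            apply mul_le_mul_of_nonneg_left _ (norm_nonneg _)
            exact le_of_lt ((hUsub (hKU hz)).2)
        _ < d := hn2
    have hTp_sub : K ∩ Tp ⊆ (fun z => ζ * z) ⁻¹' ((K ∩ T) ∪ (U \ K)) := by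
      rintro z ⟨hzK, hzTp⟩
      have hmem : ζ * z ∈ T := by
        have h1 : (ζ * z) ^ k = -(z ^ k) := by rw [mul_pow, hζk]; ring
        rw [hTdef, mem_setOf_eq, h1, norm_neg, Complex.neg_re]
        rw [hTpdef, mem_setOf_eq] at hzTp
        linarith
      have hU' : ζ * z ∈ U := hζK z hzK
      by_cases hK' : ζ * z ∈ K
      · exact Or.inl ⟨hK', hmem⟩
      · exact Or.inr ⟨hU', hK'⟩
    have hstepC : volume (K ∩ Tp) ≤ volume (K ∩ T) + ENNReal.ofReal η := by
      have hmp := rotMP ζ hζabs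
      have hpre := hmp.measure_preimage
        (((hKmeas.inter hTmeas).union (hUmeas.diff hKmeas)).nullMeasurableSet)
      calc volume (K ∩ Tp) ≤ volume ((fun z => ζ * z) ⁻¹' ((K ∩ T) ∪ (U \ K))) :=
            measure_mono hTp_sub
        _ = volume ((K ∩ T) ∪ (U \ K)) := hpre
        _ ≤ volume (K ∩ T) + volume (U \ K) := measure_union_le _ _
        _ ≤ volume (K ∩ T) + ENNReal.ofReal η := add_le_add_right hUKle _
    -- step D
    have hstepD : volume (K ∩ E) ≤ ENNReal.ofReal η := by
      have hkR : ((k:ℝ)) ≠ 0 := by positivity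
      have hMR : ((M:ℝ)) ≠ 0 := by positivity
      set θ : ℕ → ℝ := fun j => j * Real.pi / (k * M) with hθdef
      set g : ℕ → ℂ := fun j => Complex.exp ((θ j : ℂ) * Complex.I) with hgdef
      have hgabs : ∀ j, ‖g j‖ = 1 := by
        intro j
        simp only [hgdef]
        exact Complex.norm_exp_ofReal_mul_I (θ j)
      set s : ℕ → Set ℂ := fun j => (fun z => g j * z) ⁻¹' (K ∩ E) with hsdef
      have hsmeas : ∀ j, MeasurableSet (s j) := by
        intro j
        exact (hKmeas.inter hEmeas).preimage (continuous_const.mul continuous_id).measurable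
      have hsvol : ∀ j, volume (s j) = volume (K ∩ E) := fun j =>
        (rotMP (g j) (hgabs j)).measure_preimage (hKmeas.inter hEmeas).nullMeasurableSet
      have hsball : ∀ j, s j ⊆ Metric.ball (0:ℂ) r8 := by
        intro j z hz
        have hU' : g j * z ∈ U := hKU hz.1
        have habs : ‖g j * z‖ < r8 := (hUsub hU').2
        rw [norm_mul, hgabs, one_mul] at habs
        rwa [Metric.mem_ball, Complex.dist_eq, sub_zero]
      have haux : ∀ i j : ℕ, i < j → j < M → Disjoint (s i) (s j) := by
        intro i j hij hjM
        rw [Set.disjoint_left]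
        intro z hzi hzj
        have huK : g i * z ∈ K := hzi.1
        have huE : g i * z ∈ E := hzi.2
        have hvK : g j * z ∈ K := hzj.1
        have hvE : g j * z ∈ E := hzj.2
        have hu0 : g i * z ≠ 0 := by
          intro h
          have := (hUsub (hKU huK)).1
          rw [h] at this
          simp only [norm_zero] at this
          linarith
        set c : ℝ := (j - i : ℕ) * Real.pi / M with hcdef
        have hji1 : 1 ≤ j - i := by omega
        have hjiM : j - i ≤ M - 1 := by omega
        have hji1' : (1:ℝ) ≤ ((j - i : ℕ) : ℝ) := by exact_mod_cast hji1
        have hjiM' : ((j - i : ℕ) : ℝ) ≤ (M:ℝ) - 1 := by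
          have h2 : ((j - i : ℕ) : ℝ) ≤ ((M - 1 : ℕ) : ℝ) := by exact_mod_cast hjiM
          have h3 : ((M - 1 : ℕ) : ℝ) = (M:ℝ) - 1 := by
            rw [Nat.cast_sub (by omega : 1 ≤ M)]; norm_num
          linarith [h2, h3.le, h3.ge]
        -- relation between v and u
        have hvu : g j * z = Complex.exp (((θ j - θ i : ℝ) : ℂ) * Complex.I) * (g i * z) := by
          simp only [hgdef]
          rw [← mul_assoc, ← Complex.exp_add, ← add_mul]
          have harg : ((θ j - θ i : ℝ) : ℂ) + ((θ i : ℝ) : ℂ) = ((θ j : ℝ) : ℂ) := by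
            push_cast; ring
          rw [harg]
        have hvk : (g j * z) ^ k = Complex.exp ((c : ℂ) * Complex.I) * (g i * z) ^ k := by
          rw [hvu, mul_pow, ← Complex.exp_nat_mul]
          have hkc : (k:ℝ) * (θ j - θ i) = c := by
            simp only [hθdef, hcdef]
            push_cast [Nat.cast_sub hij.le]
            field_simp
          have : (k:ℂ) * (((θ j - θ i : ℝ):ℂ) * Complex.I)
              = (((k:ℝ) * (θ j - θ i) : ℝ) : ℂ) * Complex.I := by push_cast; ring
          rw [this, hkc]
        -- set up no_two
        set w : ℂ := (g i * z) ^ k with hwdef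
        have hw0 : w ≠ 0 := pow_ne_zero _ hu0
        have hApos : 0 < ‖w‖ := norm_pos_iff.mpr hw0
        have hxy : w.re ^ 2 + w.im ^ 2 = (‖w‖) ^ 2 := by
          rw [Complex.sq_norm, Complex.normSq_apply]; ring
        have hre : (Complex.exp ((c : ℂ) * Complex.I) * w).re
            = Real.cos c * w.re + (-Real.sin c) * w.im := by
          rw [Complex.exp_mul_I, Complex.mul_re]
          simp only [Complex.add_re, Complex.add_im, Complex.mul_re, Complex.mul_im,
            Complex.cos_ofReal_re, Complex.sin_ofReal_re, Complex.cos_ofReal_im,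
            Complex.sin_ofReal_im, Complex.I_re, Complex.I_im]
          ring
        have habsvw : ‖(g j * z) ^ k‖ = ‖w‖ := by
          rw [hvk, norm_mul, Complex.norm_exp_ofReal_mul_I, one_mul]
        have h1 : |w.re| ≤ δ * ‖w‖ := by
          simp only [hEdef, mem_setOf_eq] at huE
          exact huE
        have h2 : |Real.cos c * w.re + (-Real.sin c) * w.im| ≤ δ * ‖w‖ := by
          simp only [hEdef, mem_setOf_eq] at hvE
          rw [habsvw, hvk, hre] at hvE
          exact hvE
        have hcs : Real.cos c ^ 2 + (-Real.sin c) ^ 2 = 1 := by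
          rw [neg_sq]
          exact Real.cos_sq_add_sin_sq c
        have hcpos : 0 < c := by
          rw [hcdef]
          have := Real.pi_pos
          positivity
        have hclt : c < Real.pi := by
          rw [hcdef, div_lt_iff₀ hMpos]
          nlinarith [Real.pi_pos]
        have hsinc : Real.sin (Real.pi / M) ≤ Real.sin c := by
          have hpi := Real.pi_pos
          apply sin_lower (by positivity)
          · rw [div_le_div_iff₀ hMpos (by norm_num : (0:ℝ) < 2)]
            nlinarith
          · rw [hcdef, div_le_div_iff₀ hMpos hMpos]
            nlinarith [mul_le_mul_of_nonneg_right hji1' (by positivity : (0:ℝ) ≤ Real.pi * (M:ℝ))]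
          · rw [hcdef]
            have hstep : ((j - i : ℕ) : ℝ) * Real.pi / ↑M ≤ ((M:ℝ) - 1) * Real.pi / ↑M := by
              gcongr
            calc ((j - i : ℕ) : ℝ) * Real.pi / ↑M ≤ ((M:ℝ) - 1) * Real.pi / ↑M := hstep
              _ = Real.pi - Real.pi / ↑M := by field_simp
        have hsabs : Real.sin (Real.pi / M) ≤ |(-Real.sin c)| := by
          rw [abs_neg, _root_.abs_of_nonneg (Real.sin_nonneg_of_nonneg_of_le_pi hcpos.le hclt.le)]
          exact hsinc
        have hsqrt : (1:ℝ)/2 < Real.sqrt (1 - δ ^ 2) := by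
          rw [show (1:ℝ)/2 = Real.sqrt ((1/2)^2) by
            rw [Real.sqrt_sq (by norm_num : (0:ℝ) ≤ 1/2)]]
          apply Real.sqrt_lt_sqrt (by positivity)
          nlinarith
        have hslt : 2 * δ < |(-Real.sin c)| * Real.sqrt (1 - δ ^ 2) := by
          have hs1 : 2 * δ < Real.sin (Real.pi / M) / 2 := by linarith
          have hs2 : Real.sin (Real.pi / M) / 2
              < Real.sin (Real.pi / M) * Real.sqrt (1 - δ ^ 2) := by
            have := mul_lt_mul_of_pos_left hsqrt hsinpos
            linarith [this]
          have hs3 : Real.sin (Real.pi / M) * Real.sqrt (1 - δ ^ 2)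
              ≤ |(-Real.sin c)| * Real.sqrt (1 - δ ^ 2) :=
            mul_le_mul_of_nonneg_right hsabs (Real.sqrt_nonneg _)
          linarith
        exact no_two hApos hδpos.le hxy hcs h1 h2 hslt
      have hpd : (↑(Finset.range M) : Set ℕ).PairwiseDisjoint s := by
        intro i hi j hj hne
        rcases hne.lt_or_gt with h | h
        · exact haux i j h (by simpa using hj)
        · exact (haux j i h (by simpa using hi)).symm
      have hunion := measure_biUnion_finset (μ := volume) hpd (fun j _ => hsmeas j)
      have hsum : (M : ℝ≥0∞) * volume (K ∩ E) = ∑ j ∈ Finset.range M, volume (s j) := by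
        simp [hsvol, Finset.sum_const, Finset.card_range, nsmul_eq_mul]
      have hle : ∑ j ∈ Finset.range M, volume (s j) ≤ volume (Metric.ball (0:ℂ) r8) := by
        rw [← hunion]
        exact measure_mono (iUnion₂_subset fun j _ => hsball j)
      have hfinal : (M : ℝ≥0∞) * volume (K ∩ E) ≤ (M : ℝ≥0∞) * ENNReal.ofReal η := by
        rw [hsum]
        exact hle.trans hballM
      rwa [ENNReal.mul_le_mul_iff_right (by exact_mod_cast (by omega : M ≠ 0))
        (ENNReal.natCast_ne_top M)] at hfinal
    -- combine
    have hmain : volume U ≤ 2 * volume (U ∩ Y n) + ENNReal.ofReal η * 3 := by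
      calc volume U ≤ volume K + ENNReal.ofReal η := hKlt.le
        _ ≤ (volume (K ∩ T) + volume (K ∩ Tp) + volume (K ∩ E)) + ENNReal.ofReal η :=
            add_le_add_left hstepB _
        _ ≤ (volume (K ∩ T) + (volume (K ∩ T) + ENNReal.ofReal η) + ENNReal.ofReal η)
            + ENNReal.ofReal η := by gcongr
        _ = 2 * volume (K ∩ T) + ENNReal.ofReal η * 3 := by ring
        _ ≤ 2 * volume (U ∩ Y n) + ENNReal.ofReal η * 3 := by gcongr
    have hYfin : volume (U ∩ Y n) ≠ ⊤ :=
      ((measure_mono inter_subset_left).trans_lt hUfin.lt_top).ne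
    have hreal : VU ≤ 2 * (volume (U ∩ Y n)).toReal + 3 * η := by
      have hrhs_fin : 2 * volume (U ∩ Y n) + ENNReal.ofReal η * 3 ≠ ⊤ := by
        apply ENNReal.add_ne_top.mpr
        constructor
        · exact ENNReal.mul_ne_top (by simp) hYfin
        · exact ENNReal.mul_ne_top ENNReal.ofReal_ne_top (by simp)
      have h := ENNReal.toReal_mono hrhs_fin hmain
      rw [ENNReal.toReal_add (ENNReal.mul_ne_top (by simp) hYfin)
        (ENNReal.mul_ne_top ENNReal.ofReal_ne_top (by simp)),
        ENNReal.toReal_mul, ENNReal.toReal_mul, ENNReal.toReal_ofReal hη.le] at h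
      simp only [ENNReal.toReal_ofNat] at h
      rw [hVUdef]
      linarith
    simp only [dens]
    rw [← hVUdef, le_div_iff₀ hVUpos]
    have hexp : (1/2 - 3*η/(2*VU)) * VU = VU/2 - 3*η/2 := by field_simp
    rw [hexp]
    linarith
  -- conclude from key
  have hco : IsCoboundedUnder (· ≥ ·) atTop (fun n => dens U (Y n)) :=
    (isBoundedUnder_of ⟨1, fun n => hdens_le n⟩).isCoboundedUnder_ge
  by_contra hcon
  push_neg at hcon
  set L := liminf (fun n => dens U (Y n)) atTop with hLdef
  have hLlt : L < 1/2 := hcon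
  set η : ℝ := min ((1/2 - L) * VU / 3) (VU / 4) with hηdef
  have hη1 : 0 < η := by
    apply lt_min
    · nlinarith
    · linarith
  have hη2 : η < VU / 2 := lt_of_le_of_lt (min_le_right _ _) (by linarith)
  have hLge : 1/2 - 3 * η / (2 * VU) ≤ L := le_liminf_of_le hco (key η hη1 hη2)
  have hηle : η ≤ (1/2 - L) * VU / 3 := min_le_left _ _
  have : 3 * η / (2 * VU) ≤ (1/2 - L) / 2 := by
    rw [div_le_div_iff₀ (by linarith) (by norm_num)]
    nlinarith
  linarith
end
end

section
/- Let 0 < r_5 < r_7 < r_8 < r_6 < 1 be reals, let (q_n) be positive integers with q_n → ∞, and let (ε_n) be positive reals with limsup_{n→∞} ε_n^{1/q_n} < r_5. Set s_n := r_8^{q_n}/(r_8^{q_n}+ε_n). Then for all sufficiently large n the following holds: for every z ∈ ℂ with |z| > r_7, z^{q_n} ≠ ε_n and |z^{q_n}/(z^{q_n}−ε_n)| < s_n, there exists W ∈ ℂ with |Re W| < 1/(2πq_n²r_5^{q_n}), Im W > 1/(2πq_n²r_6^{q_n}), and z^{q_n} = ε_n/(1 − e^{−2πi q_n² ε_n W}).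 -/
open Filter Set

noncomputable section

lemma statement8_aux (u : ℂ) (x : ℝ) (hx : (2 * Real.pi * x) ≠ 0) :
    2 * (Real.pi:ℂ) * Complex.I * (x:ℂ) *
      (⟨Complex.arg u / (2 * Real.pi * x), -Real.log (‖u‖) / (2 * Real.pi * x)⟩ : ℂ)
    = Complex.log u := by
  apply Complex.ext <;>
    simp [Complex.log_re, Complex.log_im, Complex.mul_re, Complex.mul_im] <;>
    field_simp [right_ne_zero_of_mul hx]

set_option maxHeartbeats 1000000 in
/-- Let `0 < r_5 < r_7 < r_8 < r_6 < 1`, `(q_n)` positive integers with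
`q_n → ∞`, and `(ε_n)` positive reals with `limsup ε_n^{1/q_n} < r_5`. Then for all
sufficiently large `n`: every `z` with `|z| > r_7`, `z^{q_n} ≠ ε_n` and
`|z^{q_n}/(z^{q_n}−ε_n)| < s_n` satisfies `z^{q_n} = ε_n/(1−e^{−2πi q_n² ε_n W})` for some
`W` with `|Re W| < 1/(2πq_n²r_5^{q_n})` and `Im W > 1/(2πq_n²r_6^{q_n})`. -/
theorem statement8 (r5 r7 r8 r6 : ℝ)
    (h5 : 0 < r5) (h57 : r5 < r7) (h78 : r7 < r8) (h86 : r8 < r6) (h61 : r6 < 1)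
    (q : ℕ → ℕ) (hq : ∀ n, 0 < q n) (hqtop : Tendsto q atTop atTop)
    (ε : ℕ → ℝ) (hε : ∀ n, 0 < ε n)
    (hlimsup : Filter.limsup
      (fun n => ENNReal.ofReal ((ε n) ^ (1 / (q n : ℝ)))) Filter.atTop < ENNReal.ofReal r5) :
    ∀ᶠ n in atTop, ∀ z : ℂ, r7 < ‖z‖ → z ^ q n ≠ (ε n : ℂ) →
      ‖z ^ q n / (z ^ q n - (ε n : ℂ))‖ < r8 ^ q n / (r8 ^ q n + ε n) →
      ∃ W : ℂ,
        |W.re| < 1 / (2 * Real.pi * (q n : ℝ) ^ 2 * r5 ^ q n) ∧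
        1 / (2 * Real.pi * (q n : ℝ) ^ 2 * r6 ^ q n) < W.im ∧
        z ^ q n = (ε n : ℂ) /
          (1 - Complex.exp (-(2 * Real.pi * Complex.I * ((q n : ℝ) ^ 2 * ε n : ℝ) * W))) := by
  have hπ : (0:ℝ) < Real.pi := Real.pi_pos
  have hπ4 : Real.pi < 4 := by linarith [Real.pi_lt_d2]
  -- eventually ε n < r5 ^ q n
  have hεlt : ∀ᶠ n in atTop, ε n < r5 ^ q n := by
    filter_upwards [eventually_lt_of_limsup_lt hlimsup] with n hn
    have h1 : (ε n) ^ (1 / (q n : ℝ)) < r5 := (ENNReal.ofReal_lt_ofReal_iff h5).mp hn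
    have hq0 : (q n : ℝ) ≠ 0 := Nat.cast_ne_zero.mpr (hq n).ne'
    calc ε n = ((ε n) ^ (1 / (q n : ℝ))) ^ (q n) := by
          rw [← Real.rpow_natCast ((ε n) ^ (1/(q n:ℝ))) (q n), ← Real.rpow_mul (hε n).le,
            one_div, inv_mul_cancel₀ hq0, Real.rpow_one]
      _ < r5 ^ q n := pow_lt_pow_left₀ h1 (Real.rpow_nonneg (hε n).le _) (hq n).ne'
  -- ratio bounds
  have key : ∀ r c : ℝ, 0 ≤ r → r < 1 → 0 < c → ∀ᶠ n in atTop, r ^ q n < c := by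
    intro r c h0 h1 hc
    exact ((tendsto_pow_atTop_nhds_zero_of_lt_one h0 h1).comp hqtop).eventually
      (gt_mem_nhds hc)
  have h7pos : (0:ℝ) < r7 := h5.trans h57
  have h8pos : (0:ℝ) < r8 := h7pos.trans h78
  have h6pos : (0:ℝ) < r6 := h8pos.trans h86
  filter_upwards [hεlt,
    key (r8/r6) (1/2) (by positivity) (by rw [div_lt_one h6pos]; exact h86) (by norm_num),
    key (r5/r7) (1/8) (by positivity) (by rw [div_lt_one h7pos]; exact h57) (by norm_num)]
    with n he5 hB hC
  intro z hz hne hlt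
  have he : 0 < ε n := hε n
  set Q := q n with hQdef
  have hr7Q : 0 < r7 ^ Q := pow_pos h7pos Q
  have hr5Q : 0 < r5 ^ Q := pow_pos h5 Q
  have hr6Q : 0 < r6 ^ Q := pow_pos h6pos Q
  have hr8Q : 0 < r8 ^ Q := pow_pos h8pos Q
  have hB' : 2 * r8 ^ Q < r6 ^ Q := by
    rw [div_pow, div_lt_iff₀ hr6Q] at hB; linarith
  have hC' : 8 * r5 ^ Q < r7 ^ Q := by
    rw [div_pow, div_lt_iff₀ hr7Q] at hC; linarith
  have hr58 : r5 ^ Q < r8 ^ Q := pow_lt_pow_left₀ (by linarith) h5.le (hq n).ne'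
  have hQpos : (0:ℝ) < (Q:ℝ) := Nat.cast_pos.mpr (hq n)
  set t := z ^ Q with ht
  have hz0 : z ≠ 0 := by
    intro h; rw [h] at hz; simp at hz; linarith
  have ht0 : t ≠ 0 := pow_ne_zero _ hz0
  have hte : t - (ε n : ℂ) ≠ 0 := sub_ne_zero.mpr hne
  have htabs : r7 ^ Q ≤ ‖t‖ := by
    rw [ht, norm_pow]; exact pow_le_pow_left₀ h7pos.le hz.le Q
  set u := t / (t - (ε n:ℂ)) with hu
  have hu0 : u ≠ 0 := div_ne_zero ht0 hte
  have habsu_pos : 0 < ‖u‖ := norm_pos_iff.mpr hu0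
  have hum1 : u - 1 = (ε n : ℂ) / (t - (ε n:ℂ)) := by
    rw [hu]; field_simp; ring
  have habs_te : r7 ^ Q - ε n ≤ ‖t - (ε n:ℂ)‖ := by
    have h1 : ‖t‖ - ‖((ε n:ℝ):ℂ)‖ ≤ ‖t - (ε n:ℂ)‖ := by
      exact norm_sub_norm_le t ((ε n:ℝ):ℂ)
    rw [Complex.norm_of_nonneg he.le] at h1
    linarith
  have hte_pos : (0:ℝ) < r7 ^ Q - ε n := by nlinarith
  have habs_um1 : ‖u - 1‖ ≤ 2 * ε n / r7 ^ Q := by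
    rw [hum1, norm_div, Complex.norm_of_nonneg he.le,
      div_le_div_iff₀ (lt_of_lt_of_le hte_pos habs_te) hr7Q]
    nlinarith
  have habs_um1_lt : ‖u - 1‖ ≤ 1/4 := by
    have : 2 * ε n / r7 ^ Q ≤ 1/4 := by
      rw [div_le_iff₀ hr7Q]; nlinarith
    linarith
  have hre : 1/2 ≤ u.re := by
    have h1 : |(u-1).re| ≤ ‖u-1‖ := Complex.abs_re_le_norm _
    have h2 : u.re = 1 + (u-1).re := by simp
    rw [h2]; cases' abs_le.mp h1 with hl hr; linarith
  have him : |u.im| ≤ ‖u-1‖ := by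
    have h2 : u.im = (u-1).im := by simp
    rw [h2]; exact Complex.abs_im_le_norm _
  have habsu_ge : 1/2 ≤ ‖u‖ := by
    calc (1:ℝ)/2 ≤ u.re := hre
      _ ≤ |u.re| := le_abs_self _
      _ ≤ ‖u‖ := Complex.abs_re_le_norm u
  -- arg bound
  set θ := Complex.arg u with hθdef
  have hθ2 : |θ| ≤ Real.pi/2 := Complex.abs_arg_le_pi_div_two_iff.mpr (by linarith)
  have hsin : Real.sin θ = u.im / ‖u‖ := Complex.sin_arg u
  have habs_sin : |Real.sin θ| ≤ 2 * ‖u-1‖ := by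
    rw [hsin, abs_div, abs_of_pos habsu_pos, div_le_iff₀ habsu_pos]
    nlinarith [norm_nonneg (u-1)]
  have hsabs : Real.sin |θ| = |Real.sin θ| := by
    rcases le_or_gt 0 θ with h|h
    · rw [abs_of_nonneg h, abs_of_nonneg (Real.sin_nonneg_of_nonneg_of_le_pi h (by linarith [abs_le.mp hθ2]))]
    · rw [abs_of_neg h, Real.sin_neg, abs_of_nonpos]
      have hl := (abs_le.mp hθ2).1
      have : (0:ℝ) ≤ Real.sin (-θ) := Real.sin_nonneg_of_nonneg_of_le_pi (by linarith)
        (by linarith)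
      rw [Real.sin_neg] at this; linarith
  have hθb : |θ| ≤ Real.pi * ‖u - 1‖ := by
    have h := Real.mul_le_sin (abs_nonneg θ) hθ2
    rw [hsabs] at h
    have h' : 2 * |θ| ≤ Real.pi * |Real.sin θ| := by
      have h2 := mul_le_mul_of_nonneg_left h hπ.le
      rwa [show Real.pi * (2 / Real.pi * |θ|) = 2 * |θ| by field_simp] at h2
    nlinarith [habs_sin, hπ]
  have hargb : |θ| < ε n / r5 ^ Q := by
    have h1 : |θ| ≤ Real.pi * (2 * ε n / r7 ^ Q) := by
      calc |θ| ≤ Real.pi * ‖u-1‖ := hθb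
        _ ≤ Real.pi * (2 * ε n / r7 ^ Q) := by nlinarith
    have h2 : Real.pi * (2 * ε n / r7 ^ Q) < ε n / r5 ^ Q := by
      rw [show Real.pi * (2 * ε n / r7 ^ Q) = (Real.pi * 2 * ε n) / r7 ^ Q by ring,
        div_lt_div_iff₀ hr7Q hr5Q]
      nlinarith [mul_pos he hr5Q, mul_lt_mul_of_pos_left hC' he]
    linarith
  -- log bound
  have hlogu : Real.log (‖u‖) < -(ε n / r6 ^ Q) := by
    have hs1 : ‖u‖ < r8 ^ Q / (r8 ^ Q + ε n) := hlt
    have h2 : Real.log (‖u‖) < Real.log (r8 ^ Q / (r8 ^ Q + ε n)) :=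
      Real.log_lt_log habsu_pos hs1
    have hxpos : (0:ℝ) < r8 ^ Q / (r8 ^ Q + ε n) := by positivity
    have h3 : Real.log (r8 ^ Q / (r8 ^ Q + ε n)) ≤ r8 ^ Q / (r8 ^ Q + ε n) - 1 :=
      Real.log_le_sub_one_of_pos hxpos
    have h4 : r8 ^ Q / (r8 ^ Q + ε n) - 1 = -(ε n / (r8 ^ Q + ε n)) := by
      field_simp; ring
    have h5' : ε n / r6 ^ Q < ε n / (r8 ^ Q + ε n) := by
      rw [div_lt_div_iff₀ hr6Q (by positivity)]
      nlinarith
    rw [h4] at h3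
    linarith
  -- the point W
  have ha : (0:ℝ) < 2 * Real.pi * ((Q:ℝ)^2 * ε n) := by positivity
  have hpq : (0:ℝ) < 2 * Real.pi * (Q:ℝ)^2 := by positivity
  refine ⟨⟨θ / (2 * Real.pi * ((Q:ℝ)^2 * ε n)),
    -Real.log (‖u‖) / (2 * Real.pi * ((Q:ℝ)^2 * ε n))⟩, ?_, ?_, ?_⟩
  · show |θ / (2 * Real.pi * ((Q:ℝ)^2 * ε n))| < 1 / (2 * Real.pi * (Q : ℝ) ^ 2 * r5 ^ Q)
    rw [abs_div, abs_of_pos ha, div_lt_div_iff₀ ha (by positivity)]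
    have h1 : |θ| * r5 ^ Q < ε n := (lt_div_iff₀ hr5Q).mp hargb
    nlinarith [mul_lt_mul_of_pos_left h1 hpq]
  · show 1 / (2 * Real.pi * (Q : ℝ) ^ 2 * r6 ^ Q) <
      -Real.log (‖u‖) / (2 * Real.pi * ((Q:ℝ)^2 * ε n))
    rw [div_lt_div_iff₀ (by positivity) ha]
    have h1 : ε n / r6 ^ Q < -Real.log (‖u‖) := by linarith
    have h2 : ε n < -Real.log (‖u‖) * r6 ^ Q := by
      rw [div_lt_iff₀ hr6Q] at h1; linarith
    nlinarith [mul_lt_mul_of_pos_left h2 hpq]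
  · have hcW := statement8_aux u ((Q:ℝ)^2 * ε n) ha.ne'
    rw [hθdef]
    rw [hcW, Complex.exp_neg, Complex.exp_log hu0, hu, inv_div]
    have hε0 : ((ε n : ℝ):ℂ) ≠ 0 := Complex.ofReal_ne_zero.mpr he.ne'
    rw [show (1:ℂ) - (t - (ε n:ℂ))/t = (ε n:ℂ)/t by field_simp; ring]
    rw [div_div_eq_mul_div, mul_comm, mul_div_assoc, div_self hε0, mul_one]
end
end

section
/- Let 0 < ε < R be reals. Then for every z ∈ ℂ with |z| ≥ R (so in particular z ≠ ε), the number w := z/(z−ε) satisfies (Re w − R²/(R²−ε²))² + (Im w)² ≤ (εR/(R²−ε²))²; consequently |w| ≥ R/(R+ε) and |Arg w| ≤ arcsin(ε/R), where Arg denotes the principal argument. -/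
open Set Metric

noncomputable section

set_option maxHeartbeats 1000000

/-- For `0 < ε < R` and `z ∈ ℂ` with `|z| ≥ R` (so in particular `z ≠ ε`),
the number `w = z/(z−ε)` lies in the closed disk of center `R²/(R²−ε²)` and radius
`εR/(R²−ε²)`; consequently `|w| ≥ R/(R+ε)` and `|Arg w| ≤ arcsin(ε/R)`. -/
theorem statement9 (ε R : ℝ) (hε : 0 < ε) (hεR : ε < R) (z : ℂ)
    (hz : R ≤ ‖z‖) :
    z ≠ (ε : ℂ) ∧
    ((z / (z - (ε : ℂ))).re - R ^ 2 / (R ^ 2 - ε ^ 2)) ^ 2 + ((z / (z - (ε : ℂ))).im) ^ 2 ≤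
      (ε * R / (R ^ 2 - ε ^ 2)) ^ 2 ∧
    R / (R + ε) ≤ ‖z / (z - (ε : ℂ))‖ ∧
    |Complex.arg (z / (z - (ε : ℂ)))| ≤ Real.arcsin (ε / R) := by
  have hR : (0:ℝ) < R := hε.trans hεR
  have hden : (0:ℝ) < R ^ 2 - ε ^ 2 := by nlinarith
  have hzε : z ≠ (ε : ℂ) := by
    intro h
    rw [h, Complex.norm_real, Real.norm_eq_abs, abs_of_pos hε] at hz
    linarith
  have hsub : z - (ε : ℂ) ≠ 0 := sub_ne_zero.mpr hzε
  obtain ⟨w, hw⟩ : ∃ w : ℂ, w = z / (z - (ε : ℂ)) := ⟨_, rfl⟩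
  obtain ⟨c, hcdef⟩ : ∃ c : ℝ, c = R ^ 2 / (R ^ 2 - ε ^ 2) := ⟨_, rfl⟩
  obtain ⟨r, hrdef⟩ : ∃ r : ℝ, r = ε * R / (R ^ 2 - ε ^ 2) := ⟨_, rfl⟩
  rw [← hw, ← hcdef, ← hrdef]
  have hr : 0 < r := by rw [hrdef]; positivity
  have hc : 0 < c := by rw [hcdef]; positivity
  have hnormsq : R ^ 2 ≤ Complex.normSq z := by
    rw [← Complex.sq_norm]; nlinarith [norm_nonneg z]
  -- key inequality on norms
  have key : ‖(R:ℂ) ^ 2 - (ε:ℂ) * z‖ ≤ R * ‖z - (ε:ℂ)‖ := by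
    rw [← pow_le_pow_iff_left₀ (norm_nonneg _)
      (by positivity : (0:ℝ) ≤ R * ‖z - (ε:ℂ)‖) (two_ne_zero)]
    rw [mul_pow, Complex.sq_norm, Complex.sq_norm]
    have h3 := hnormsq
    rw [Complex.normSq_apply] at h3 ⊢
    rw [Complex.normSq_apply]
    simp only [← Complex.ofReal_pow, Complex.sub_re, Complex.sub_im, Complex.mul_re,
      Complex.mul_im, Complex.ofReal_re, Complex.ofReal_im]
    nlinarith [mul_nonneg hden.le (sub_nonneg.2 h3)]
  -- w - c as a fraction
  have hwc : w - (c:ℂ) =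
      (ε:ℂ) * ((R:ℂ) ^ 2 - (ε:ℂ) * z) / (((R:ℂ) ^ 2 - (ε:ℂ) ^ 2) * (z - (ε:ℂ))) := by
    have hden' : ((R:ℂ) ^ 2 - (ε:ℂ) ^ 2) ≠ 0 := by
      intro h
      have : ((R:ℝ) ^ 2 - ε ^ 2 : ℝ) = 0 := by
        exact_mod_cast (by push_cast at h ⊢; exact h : ((R ^ 2 - ε ^ 2 : ℝ) : ℂ) = 0)
      linarith
    rw [hw, hcdef]
    push_cast
    field_simp
    ring
  have habs_wc : ‖w - (c:ℂ)‖ ≤ r := by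
    rw [hwc, norm_div, norm_mul, norm_mul, Complex.norm_real, Real.norm_eq_abs, abs_of_pos hε]
    have hd2 : ‖(R:ℂ) ^ 2 - (ε:ℂ) ^ 2‖ = R ^ 2 - ε ^ 2 := by
      rw [show ((R:ℂ) ^ 2 - (ε:ℂ) ^ 2) = ((R ^ 2 - ε ^ 2 : ℝ) : ℂ) by push_cast; ring,
        Complex.norm_real, Real.norm_eq_abs, abs_of_pos hden]
    rw [hd2, hrdef]
    have hzsub : 0 < ‖z - (ε:ℂ)‖ := by
      simpa using norm_pos_iff.mpr hsub
    rw [div_le_div_iff₀ (by positivity) hden]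
    nlinarith [mul_nonneg (mul_nonneg hε.le hden.le) (sub_nonneg.2 key)]
  -- disk inequality in coordinates
  have hdisk : (w.re - c) ^ 2 + w.im ^ 2 ≤ r ^ 2 := by
    have h5 : Complex.normSq (w - (c:ℂ)) ≤ r ^ 2 := by
      rw [← Complex.sq_norm]
      exact pow_le_pow_left₀ (norm_nonneg _) habs_wc 2
    rw [Complex.normSq_apply, Complex.sub_re, Complex.sub_im, Complex.ofReal_re,
      Complex.ofReal_im] at h5
    nlinarith [h5]
  -- lower bound on real part
  have hcr : c - r = R / (R + ε) := by
    rw [hcdef, hrdef]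
    have h1 : R + ε ≠ 0 := by positivity
    field_simp
    ring
  have hxre : R / (R + ε) ≤ w.re := by
    rw [← hcr]
    nlinarith [hdisk, sq_nonneg w.im]
  have hxpos : 0 < w.re := lt_of_lt_of_le (by positivity) hxre
  have habsw : R / (R + ε) ≤ ‖w‖ :=
    le_trans hxre (Complex.re_le_norm w)
  have habswpos : 0 < ‖w‖ := lt_of_lt_of_le (by positivity) habsw
  -- bound on |im| relative to |w|
  have him2 : R ^ 2 * w.im ^ 2 ≤ ε ^ 2 * (w.re ^ 2 + w.im ^ 2) := by
    have hc' : c * (R ^ 2 - ε ^ 2) = R ^ 2 := by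
      rw [hcdef]; field_simp
    have hr' : r * (R ^ 2 - ε ^ 2) = ε * R := by
      rw [hrdef]; field_simp
    have hdisk' : ((R ^ 2 - ε ^ 2) * w.re - R ^ 2) ^ 2 + (R ^ 2 - ε ^ 2) ^ 2 * w.im ^ 2
        ≤ ε ^ 2 * R ^ 2 := by
      have e1 : ((R ^ 2 - ε ^ 2) * w.re - R ^ 2) ^ 2 = (R ^ 2 - ε ^ 2) ^ 2 * (w.re - c) ^ 2 := by
        linear_combination (2 * (R ^ 2 - ε ^ 2) * w.re - R ^ 2 - (R ^ 2 - ε ^ 2) * c) * hc'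
      have e2 : ε ^ 2 * R ^ 2 = (R ^ 2 - ε ^ 2) ^ 2 * r ^ 2 := by
        have : (R ^ 2 - ε ^ 2) ^ 2 * r ^ 2 = (r * (R ^ 2 - ε ^ 2)) ^ 2 := by ring
        rw [this, hr']; ring
      rw [e1, e2]
      nlinarith [mul_le_mul_of_nonneg_left hdisk (sq_nonneg (R ^ 2 - ε ^ 2))]
    have h6 : (R ^ 2 - ε ^ 2) * (ε ^ 2 * (w.re ^ 2 + w.im ^ 2) - R ^ 2 * w.im ^ 2) =
        R ^ 2 * (R ^ 2 - ε ^ 2) * (w.re - 1) ^ 2 +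
          (ε ^ 2 * R ^ 2 -
            (((R ^ 2 - ε ^ 2) * w.re - R ^ 2) ^ 2 + (R ^ 2 - ε ^ 2) ^ 2 * w.im ^ 2)) := by
      ring
    have h7 : 0 ≤ (R ^ 2 - ε ^ 2) * (ε ^ 2 * (w.re ^ 2 + w.im ^ 2) - R ^ 2 * w.im ^ 2) := by
      rw [h6]
      have h8 := mul_nonneg (mul_nonneg (sq_nonneg R) hden.le) (sq_nonneg (w.re - 1))
      linarith [hdisk', h8]
    nlinarith [h7, hden]
  have himabs : |w.im| ≤ ε / R * ‖w‖ := by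
    rw [← pow_le_pow_iff_left₀ (abs_nonneg _) (by positivity) (two_ne_zero)]
    rw [sq_abs, mul_pow, div_pow, Complex.sq_norm, Complex.normSq_apply]
    rw [div_mul_eq_mul_div, le_div_iff₀ (by positivity)]
    nlinarith [him2]
  -- argument bound
  have harg : Complex.arg w = Real.arcsin (w.im / ‖w‖) :=
    Complex.arg_of_re_nonneg hxpos.le
  have ht : |w.im / ‖w‖| ≤ ε / R := by
    rw [abs_div, abs_of_pos habswpos, div_le_iff₀ habswpos]
    exact himabs
  have htle := abs_le.mp ht
  have hεR1 : ε / R ≤ 1 := by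
    rw [div_le_one hR]; exact hεR.le
  refine ⟨hzε, hdisk, habsw, ?_⟩
  rw [harg]
  rw [abs_le]
  constructor
  · rw [← Real.arcsin_neg]
    exact Real.monotone_arcsin htle.1
  · exact Real.monotone_arcsin htle.2
end
end

section
/- Let A ∈ (1,+∞] and 1/A < r < r' < 1 (with 1/A := 0 if A = +∞). Let (q_n) be positive integers with q_n → ∞ and (ε_n) positive reals with ε_n^{1/q_n} → 1/A. Then there exist M > 0 and N such that for all n ≥ N and all Z ∈ Q_n(1/(2πq_n²r^{q_n})): the open ball B(Z, 1/(2πq_n²r'^{q_n})) is contained in Q_n, and |ε_n/(1 − e^{−2πiq_n²ε_nZ})| ≤ M·r^{q_n}. -/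
open Filter Set Metric

noncomputable section

/-- The domain `Q_n = ℍ⁺ ∪ ℍ⁻ ∪ (−1/(q²ε), 0)`. -/
def QnSet (q : ℕ) (ε : ℝ) : Set ℂ :=
  {Z : ℂ | 0 < Z.im} ∪ {Z : ℂ | Z.im < 0} ∪
    {Z : ℂ | Z.im = 0 ∧ Z.re ∈ Set.Ioo (-(1 / ((q : ℝ) ^ 2 * ε))) 0}

/-- The sector region `Q_n(a) = {Z : Re(Z − a + 1/(q²ε)) > −|Im(Z − a + 1/(q²ε))|` and
`Re(Z + a) < |Im(Z + a)|}`. -/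
def QnSector (q : ℕ) (ε a : ℝ) : Set ℂ :=
  {Z : ℂ |
    -|(Z - (a : ℂ) + ((1 / ((q : ℝ) ^ 2 * ε) : ℝ) : ℂ)).im| <
      (Z - (a : ℂ) + ((1 / ((q : ℝ) ^ 2 * ε) : ℝ) : ℂ)).re ∧
    (Z + (a : ℂ)).re < |(Z + (a : ℂ)).im|}

lemma exp_neg_le_one_sub_half {s : ℝ} (h0 : 0 ≤ s) (h1 : s ≤ 1/2) :
    Real.exp (-s) ≤ 1 - s/2 := by
  have hm : Real.exp (-s) * Real.exp s = 1 := by rw [← Real.exp_add]; simp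
  nlinarith [Real.add_one_le_exp s, Real.exp_pos (-s), Real.exp_pos s]

lemma abs_exp_re_sub_one_le (z : ℂ) :
    |Real.exp z.re - 1| ≤ ‖1 - Complex.exp z‖ := by
  have h := abs_norm_sub_norm_le (Complex.exp z) 1
  rw [norm_sub_rev] at h
  simpa [Complex.norm_exp] using h

set_option maxHeartbeats 1600000 in
lemma keyLemma (qn : ℕ) (εn r r' : ℝ) (hqn : 0 < qn) (hεn : 0 < εn) (hr : 0 < r)
    (hα : εn / (2 * Real.pi * r ^ qn) ≤ 1 / 20)
    (hρ : 2 * r ^ qn ≤ r' ^ qn) (hr' : 0 < r') :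
    ∀ Z ∈ QnSector qn εn (1 / (2 * Real.pi * (qn : ℝ) ^ 2 * r ^ qn)),
      Metric.ball Z (1 / (2 * Real.pi * (qn : ℝ) ^ 2 * r' ^ qn)) ⊆ QnSet qn εn ∧
      ‖(εn : ℂ) /
          (1 - Complex.exp (-(2 * Real.pi * Complex.I * ((qn : ℝ) ^ 2 * εn : ℝ) * Z)))‖ ≤
        2 * Real.pi * r ^ qn := by
  intro Z hZ
  have hπ : (3:ℝ) < Real.pi := Real.pi_gt_three
  have hπ4 : Real.pi ≤ 4 := Real.pi_le_four
  have hqr : (0:ℝ) < (qn:ℝ) := by exact_mod_cast hqn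
  simp only [QnSector, Set.mem_setOf_eq, Complex.add_im, Complex.sub_im, Complex.ofReal_im,
    Complex.add_re, Complex.sub_re, Complex.ofReal_re, sub_zero, add_zero] at hZ
  obtain ⟨H1, H2⟩ := hZ
  simp only [QnSet, Set.mem_union, Set.mem_setOf_eq, Set.mem_Ioo]
  set c : ℝ := (qn:ℝ)^2 * εn with hc
  have hcpos : 0 < c := by rw [hc]; positivity
  set a : ℝ := 1 / (2 * Real.pi * (qn:ℝ)^2 * r ^ qn) with ha
  set ρ : ℝ := 1 / (2 * Real.pi * (qn:ℝ)^2 * r' ^ qn) with hρ'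
  have hapos : 0 < a := by rw [ha]; positivity
  have hρpos : 0 < ρ := by rw [hρ']; positivity
  set α : ℝ := εn / (2 * Real.pi * r ^ qn) with hαdef
  have hαpos : 0 < α := by rw [hαdef]; positivity
  have hca : c * a = α := by rw [hc, ha, hαdef]; field_simp
  clear_value c a ρ α
  have h2ρ : 2 * ρ ≤ a := by
    have h1 : (0:ℝ) < 2*Real.pi*(qn:ℝ)^2*r^qn := by positivity
    have h2 : (0:ℝ) < 2*Real.pi*(qn:ℝ)^2*r'^qn := by positivity
    rw [ha, hρ', mul_one_div, div_le_div_iff₀ h2 h1]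
    nlinarith [mul_le_mul_of_nonneg_left hρ (by positivity : (0:ℝ) ≤ 2*Real.pi*(qn:ℝ)^2)]
  constructor
  · -- ball containment
    intro W hW
    rw [Metric.mem_ball, Complex.dist_eq] at hW
    have hre : |(W - Z).re| ≤ ‖W - Z‖ := Complex.abs_re_le_norm _
    have him : |(W - Z).im| ≤ ‖W - Z‖ := Complex.abs_im_le_norm _
    rcases lt_trichotomy W.im 0 with hWim | hWim | hWim
    · exact Or.inl (Or.inr hWim)
    · have h1 : |Z.im| ≤ ‖W - Z‖ := by
        simpa [Complex.sub_im, hWim] using him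
      have h2 : |W.re - Z.re| ≤ ‖W - Z‖ := by
        simpa [Complex.sub_re] using hre
      refine Or.inr ⟨hWim, ?_, ?_⟩
      · linarith [neg_abs_le (W.re - Z.re), le_abs_self Z.im, neg_abs_le Z.im]
      · linarith [le_abs_self (W.re - Z.re)]
    · exact Or.inl (Or.inl hWim)
  · -- the modulus bound
    set z : ℂ := -(2 * (Real.pi : ℂ) * Complex.I * (c : ℂ) * Z) with hz
    set u : ℝ := c * Z.re with hu
    set v : ℝ := c * Z.im with hv
    clear_value z u v
    have hzre : z.re = 2 * Real.pi * v := by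
      rw [hz, hv]
      simp [Complex.mul_re, Complex.mul_im]
      ring
    have hzim : z.im = -(2 * Real.pi * u) := by
      rw [hz, hu]
      simp [Complex.mul_re, Complex.mul_im]
      ring
    have hcv : |v| = c * |Z.im| := by rw [hv, abs_mul, abs_of_pos hcpos]
    have hu2 : u + α < |v| := by
      have h := mul_lt_mul_of_pos_left H2 hcpos
      rw [mul_add, hca] at h
      rw [hu, hcv]; exact h
    have hu1 : α - 1 - |v| < u := by
      have h := mul_lt_mul_of_pos_left H1 hcpos
      have e1 : c * (Z.re - a + 1/c) = c * Z.re - α + 1 := by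
        rw [← hca]; field_simp
      rw [e1, mul_neg] at h
      rw [hu, hcv]; linarith
    have hLB : α ≤ ‖1 - Complex.exp z‖ := by
      have hA1 : |Real.exp z.re - 1| ≤ ‖1 - Complex.exp z‖ :=
        abs_exp_re_sub_one_le z
      have hIm : Real.exp z.re * |Real.sin z.im| ≤ ‖1 - Complex.exp z‖ := by
        have h := Complex.abs_im_le_norm (1 - Complex.exp z)
        rw [Complex.sub_im, Complex.one_im, Complex.exp_im] at h
        simpa [abs_mul, Real.abs_exp] using h
      rcases le_or_gt α |v| with hAv | hAv
      · rcases le_abs.mp hAv with h | h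
        · have h1 : 2*Real.pi*v + 1 ≤ Real.exp z.re := by
            rw [hzre]; exact Real.add_one_le_exp _
          have h2 : α ≤ Real.exp z.re - 1 := by nlinarith
          calc α ≤ Real.exp z.re - 1 := h2
            _ ≤ |Real.exp z.re - 1| := le_abs_self _
            _ ≤ _ := hA1
        · have hs : Real.exp z.re ≤ 1 - (2*Real.pi*α)/2 := by
            rw [hzre]
            calc Real.exp (2*Real.pi*v) ≤ Real.exp (-(2*Real.pi*α)) := by
                  apply Real.exp_le_exp.2; nlinarith
              _ ≤ 1 - (2*Real.pi*α)/2 :=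
                  exp_neg_le_one_sub_half (by positivity) (by nlinarith)
          have h2 : α ≤ 1 - Real.exp z.re := by nlinarith
          calc α ≤ 1 - Real.exp z.re := h2
            _ ≤ |Real.exp z.re - 1| := by rw [abs_sub_comm]; exact le_abs_self _
            _ ≤ _ := hA1
      · -- case |v| < α
        have hβpos : 0 < α - |v| := by linarith
        have hB1 : 2 * |v| ≤ |Real.exp z.re - 1| := by
          rcases le_or_gt 0 v with hvv | hvv
          · have h1 : 2*Real.pi*v + 1 ≤ Real.exp z.re := by
              rw [hzre]; exact Real.add_one_le_exp _
            have h2 : 2*|v| ≤ Real.exp z.re - 1 := by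
              rw [abs_of_nonneg hvv]; nlinarith
            exact h2.trans (le_abs_self _)
          · have hvle : -v ≤ |v| := neg_le_abs v
            have hsle : Real.exp z.re ≤ 1 - (2*Real.pi*(-v))/2 := by
              rw [hzre]
              have he : 2*Real.pi*v = -(2*Real.pi*(-v)) := by ring
              rw [he]
              exact exp_neg_le_one_sub_half (by nlinarith) (by nlinarith)
            have h2 : 2*|v| ≤ 1 - Real.exp z.re := by
              rw [abs_of_neg hvv]; nlinarith
            exact h2.trans (by rw [abs_sub_comm]; exact le_abs_self _)
        have hfin : 4 * (α - |v|) ≤ |Real.sin z.im| →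
            α ≤ ‖1 - Complex.exp z‖ := by
          intro hs
          have hexp : (1:ℝ)/2 ≤ Real.exp z.re := by
            rw [hzre]
            have h1 : Real.exp (-(2*Real.pi*α)) ≤ Real.exp (2*Real.pi*v) := by
              apply Real.exp_le_exp.2
              nlinarith [neg_abs_le v]
            have h2 : 1 - 2*Real.pi*α ≤ Real.exp (-(2*Real.pi*α)) := by
              have := Real.add_one_le_exp (-(2*Real.pi*α)); linarith
            nlinarith
          have h3 : 2*(α - |v|) ≤ Real.exp z.re * |Real.sin z.im| := by
            nlinarith [abs_nonneg (Real.sin z.im)]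
          have c1 : 2*(α - |v|) ≤ ‖1 - Complex.exp z‖ := h3.trans hIm
          have c2 : 2*|v| ≤ ‖1 - Complex.exp z‖ := hB1.trans hA1
          linarith
        rcases lt_or_ge u (-(3/4) : ℝ) with hL | hL
        · apply hfin
          have hu' : α - |v| < u + 1 := by linarith
          have hx0 : 0 ≤ 2*Real.pi*(u+1) := by nlinarith
          have hx1 : 2*Real.pi*(u+1) ≤ Real.pi/2 := by nlinarith
          have hsin := Real.mul_le_sin hx0 hx1
          have h4 : 2/Real.pi*(2*Real.pi*(u+1)) = 4*(u+1) := by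
            field_simp; ring
          rw [h4] at hsin
          have hval : Real.sin z.im = -Real.sin (2*Real.pi*(u+1)) := by
            rw [hzim]
            have he : -(2*Real.pi*u) = -(2*Real.pi*(u+1)) + 2*Real.pi := by ring
            rw [he, Real.sin_add_two_pi, Real.sin_neg]
          rw [hval, abs_neg]
          calc 4*(α-|v|) ≤ 4*(u+1) := by linarith
            _ ≤ Real.sin (2*Real.pi*(u+1)) := hsin
            _ ≤ |Real.sin (2*Real.pi*(u+1))| := le_abs_self _
        · rcases lt_or_ge (-(1/4) : ℝ) u with hR | hR
          · apply hfin
            have hun : u < 0 := by nlinarith [abs_nonneg v]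
            have hx0 : 0 ≤ -(2*Real.pi*u) := by nlinarith
            have hx1 : -(2*Real.pi*u) ≤ Real.pi/2 := by nlinarith
            have hsin := Real.mul_le_sin hx0 hx1
            have h4 : 2/Real.pi*(-(2*Real.pi*u)) = -(4*u) := by
              field_simp; ring
            rw [h4] at hsin
            have hval : Real.sin z.im = Real.sin (-(2*Real.pi*u)) := by rw [hzim]
            rw [hval]
            calc 4*(α-|v|) ≤ -(4*u) := by linarith
              _ ≤ Real.sin (-(2*Real.pi*u)) := hsin
              _ ≤ |Real.sin (-(2*Real.pi*u))| := le_abs_self _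
          · have hzim1 : Real.pi/2 ≤ z.im := by rw [hzim]; nlinarith
            have hzim2 : z.im ≤ Real.pi + Real.pi/2 := by rw [hzim]; nlinarith
            have hcos := Real.cos_nonpos_of_pi_div_two_le_of_le hzim1 hzim2
            have hre1 : (1:ℝ) ≤ (1 - Complex.exp z).re := by
              rw [Complex.sub_re, Complex.one_re, Complex.exp_re]
              nlinarith [Real.exp_pos z.re]
            calc α ≤ 1 := by linarith
              _ ≤ (1 - Complex.exp z).re := hre1
              _ ≤ |(1 - Complex.exp z).re| := le_abs_self _
              _ ≤ ‖1 - Complex.exp z‖ := Complex.abs_re_le_norm _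
    have habs : ‖(εn:ℂ) / (1 - Complex.exp z)‖ =
        εn / ‖1 - Complex.exp z‖ := by
      rw [norm_div, Complex.norm_of_nonneg hεn.le]
    rw [habs, div_le_iff₀ (lt_of_lt_of_le hαpos hLB)]
    have heq : 2*Real.pi*r^qn * α = εn := by rw [hαdef]; field_simp
    nlinarith [mul_le_mul_of_nonneg_left hLB (by positivity : (0:ℝ) ≤ 2*Real.pi*r^qn)]

set_option maxHeartbeats 800000 in
/-- Lemma 3.1(a). Let `A ∈ (1,+∞]` and `1/A < r < r' < 1`, let `(q_n)` be
positive integers with `q_n → ∞` and `(ε_n)` positive reals with `ε_n^{1/q_n} → 1/A`. Then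
there exist `M > 0` and `N` such that for all `n ≥ N` and all `Z ∈ Q_n(1/(2πq_n²r^{q_n}))`:
`B(Z, 1/(2πq_n²r'^{q_n})) ⊆ Q_n` and `|ε_n/(1 − e^{−2πiq_n²ε_nZ})| ≤ M·r^{q_n}`. -/
theorem statement15 (invA r r' : ℝ) (h0 : 0 ≤ invA) (h1 : invA < r) (h2 : r < r') (h3 : r' < 1)
    (q : ℕ → ℕ) (hq : ∀ n, 0 < q n) (hqtop : Tendsto q atTop atTop)
    (ε : ℕ → ℝ) (hε : ∀ n, 0 < ε n)
    (hεlim : Tendsto (fun n => (ε n) ^ (1 / (q n : ℝ))) atTop (nhds invA)) :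
    ∃ M : ℝ, 0 < M ∧ ∃ N : ℕ, ∀ n ≥ N,
      ∀ Z ∈ QnSector (q n) (ε n) (1 / (2 * Real.pi * (q n : ℝ) ^ 2 * r ^ q n)),
        Metric.ball Z (1 / (2 * Real.pi * (q n : ℝ) ^ 2 * r' ^ q n)) ⊆ QnSet (q n) (ε n) ∧
        ‖(ε n : ℂ) /
            (1 - Complex.exp (-(2 * Real.pi * Complex.I * ((q n : ℝ) ^ 2 * ε n : ℝ) * Z)))‖ ≤
          M * r ^ q n := by
  have hrpos : 0 < r := lt_of_le_of_lt h0 h1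
  have hr'pos : 0 < r' := lt_trans hrpos h2
  refine ⟨2 * Real.pi, by positivity, ?_⟩
  set r₁ : ℝ := (invA + r)/2 with hr₁
  have hAr₁ : invA < r₁ := by rw [hr₁]; linarith
  have hr₁r : r₁ < r := by rw [hr₁]; linarith
  have hr₁pos : 0 < r₁ := by rw [hr₁]; linarith
  clear_value r₁
  have E1 : ∀ᶠ n in atTop, ε n ^ (1/(q n : ℝ)) < r₁ := hεlim.eventually_lt_const hAr₁
  have E2 : ∀ᶠ n in atTop, (r₁/r)^(q n) < 1/20 := by
    have h1 : Tendsto (fun n => (r₁/r)^(q n)) atTop (nhds 0) :=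
      (tendsto_pow_atTop_nhds_zero_of_lt_one (by positivity)
        (by rw [div_lt_one hrpos]; exact hr₁r)).comp hqtop
    exact h1.eventually_lt_const (by norm_num)
  have E3 : ∀ᶠ n in atTop, (r/r')^(q n) < 1/2 := by
    have h1 : Tendsto (fun n => (r/r')^(q n)) atTop (nhds 0) :=
      (tendsto_pow_atTop_nhds_zero_of_lt_one (by positivity)
        (by rw [div_lt_one hr'pos]; exact h2)).comp hqtop
    exact h1.eventually_lt_const (by norm_num)
  obtain ⟨N, hN⟩ := eventually_atTop.1 ((E1.and E2).and E3)
  refine ⟨N, fun n hn Z hZ => ?_⟩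
  obtain ⟨⟨e1, e2⟩, e3⟩ := hN n hn
  have hqn0 : ((q n : ℝ)) ≠ 0 := Nat.cast_ne_zero.2 (hq n).ne'
  have hεlt : ε n < r₁ ^ (q n) := by
    have h := Real.rpow_lt_rpow (Real.rpow_nonneg (hε n).le _) e1
      (by exact_mod_cast (hq n) : (0:ℝ) < ((q n : ℕ) : ℝ))
    have ha2 : ((ε n) ^ (1/(q n:ℝ))) ^ (((q n : ℕ)) : ℝ) = ε n := by
      rw [← Real.rpow_mul (hε n).le, one_div_mul_cancel hqn0, Real.rpow_one]
    have ha3 : r₁ ^ (((q n : ℕ)) : ℝ) = r₁ ^ (q n) := Real.rpow_natCast _ _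
    rw [ha2, ha3] at h
    exact h
  have hp : (0:ℝ) < r ^ (q n) := pow_pos hrpos _
  have hαn : ε n / (2*Real.pi*r^(q n)) ≤ 1/20 := by
    have hk : r₁ ^ (q n) = (r₁/r)^(q n) * r^(q n) := by
      rw [div_pow, div_mul_cancel₀ _ (pow_ne_zero _ hrpos.ne')]
    rw [div_le_iff₀ (by positivity)]
    nlinarith [mul_lt_mul_of_pos_right e2 hp, Real.pi_gt_three]
  have hρn : 2 * r^(q n) ≤ r'^(q n) := by
    have hp' : (0:ℝ) < r' ^ (q n) := pow_pos hr'pos _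
    have hk : r ^ (q n) = (r/r')^(q n) * r'^(q n) := by
      rw [div_pow, div_mul_cancel₀ _ (pow_ne_zero _ hr'pos.ne')]
    nlinarith [mul_lt_mul_of_pos_right e3 hp']
  exact keyLemma (q n) (ε n) r r' (hq n) (hε n) hrpos hαn hρn hr'pos Z hZ
end
end

section
/- Let A ∈ (1,+∞] and 1/A < r < r' < r_0 < 1 (with 1/A := 0 if A = +∞). Let (q_n) be positive integers with q_n → ∞, (ε_n) positive reals with ε_n^{1/q_n} → 1/A, and (B_n) positive reals with limsup B_n^{1/q_n} ≤ 1. For each n let η_n ∈ ℂ with |η_n| ≤ B_n ε_n, let k_n: D_{r_0} → ℂ be holomorphic with |k_n(z)| ≤ B_n on D_{r_0}, and define g_n(z) := z + 2πi q_n z(ε_n − z^{q_n})(1 + η_n + (ε_n − z^{q_n})k_n(z)). Then there exists N such that for all n ≥ N, for every holomorphic h: Q_n → ℂ with h(Z)^{q_n} = ε_n/(1 − e^{−2πiq_n²ε_nZ}) on Q_n, and for every Z ∈ Q_n(1/(2πq_n²r^{q_n})): h(Z) ∈ D_{r_0}, and there exists W ∈ B(Z, 1/(2πq_n²r'^{q_n}))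 such that h(W) = g_n(h(Z)) and |W − Z − 1| < 1/4. -/
open Filter Set Metric

noncomputable section

open Complex Real

namespace Complex

noncomputable def abs : AbsoluteValue ℂ ℝ where
  toFun z := ‖z‖
  map_mul' := norm_mul
  nonneg' := norm_nonneg
  eq_zero' _ := norm_eq_zero
  add_le' := norm_add_le

lemma abs_apply (z : ℂ) : abs z = ‖z‖ := rfl
lemma abs_exp (z : ℂ) : abs (exp z) = Real.exp z.re := norm_exp z
lemma abs_ofReal (x : ℝ) : abs (x : ℂ) = |x| := by simp [abs_apply]
lemma abs_I : abs I = 1 := by simp [abs_apply]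
lemma abs_natCast (n : ℕ) : abs (n : ℂ) = n := by simp [abs_apply]
lemma abs_two : abs 2 = 2 := by simp [abs_apply]
lemma sq_abs (z : ℂ) : abs z ^ 2 = normSq z := Complex.sq_norm z
lemma abs_exp_sub_one_sub_id_le {x : ℂ} (hx : abs x ≤ 1) :
    abs (exp x - 1 - x) ≤ abs x ^ 2 := Complex.norm_exp_sub_one_sub_id_le hx
lemma abs_exp_sub_one_le {x : ℂ} (hx : abs x ≤ 1) :
    abs (exp x - 1) ≤ 2 * abs x := Complex.norm_exp_sub_one_le hx
lemma abs_im_le_abs (z : ℂ) : |z.im| ≤ abs z := Complex.abs_im_le_norm z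
lemma abs_re_le_abs (z : ℂ) : |z.re| ≤ abs z := Complex.abs_re_le_norm z

end Complex

set_option maxHeartbeats 1000000

lemma log_close {u : ℂ} (hu : Complex.abs u ≤ 1/2) :
    Complex.abs (Complex.log (1 + u) - u) ≤ Complex.abs u ^ 2 ∧
    Complex.abs (Complex.log (1 + u)) ≤ 2 * Complex.abs u := by
  have h1 : ‖u‖ < 1 := lt_of_le_of_lt hu (by norm_num)
  have h2 := Complex.norm_log_one_add_sub_self_le h1
  have hn : ‖u‖ = Complex.abs u := rfl
  have hinv : (1 - ‖u‖)⁻¹ ≤ 2 := by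
    rw [hn] at *
    have : (1:ℝ)/2 ≤ 1 - Complex.abs u := by linarith
    rw [inv_eq_one_div]
    rw [div_le_iff₀ (by linarith [Complex.abs.nonneg u])]
    nlinarith [Complex.abs.nonneg u]
  constructor
  · calc Complex.abs (Complex.log (1 + u) - u) ≤ ‖u‖^2 * (1-‖u‖)⁻¹/2 := h2
      _ ≤ ‖u‖^2 * 2 / 2 := by
          apply div_le_div_of_nonneg_right _ (by norm_num)
          exact mul_le_mul_of_nonneg_left hinv (by positivity)
      _ = Complex.abs u ^ 2 := by rw [hn]; ring
  · have := Complex.norm_log_one_add_half_le_self (by rw [hn]; exact hu)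
    have h3 : ‖Complex.log (1+u)‖ = Complex.abs (Complex.log (1+u)) := rfl
    rw [hn, h3] at this; linarith [this, Complex.abs.nonneg u]

lemma root_sep {m : ℕ} (hm : 1 ≤ m) {x : ℂ} (hx : x ^ m = 1)
    (hd : Complex.abs (x - 1) ≤ 1 / (2 * m)) : x = 1 := by
  by_contra hne
  have hxabs : Complex.abs x ≤ 1 + 1/(2*m) := by
    calc Complex.abs x = Complex.abs (x - 1 + 1) := by ring_nf
      _ ≤ Complex.abs (x - 1) + 1 := by
          simpa using Complex.abs.add_le (x-1) 1
      _ ≤ 1 + 1/(2*m) := by linarith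
  have key : ∀ i : ℕ, i ≤ m → Complex.abs (x ^ i - 1) ≤ 2 * i * Complex.abs (x - 1) := by
    intro i hi
    induction i with
    | zero => simp
    | succ j ih =>
      have hj : j ≤ m := Nat.le_of_succ_le hi
      have ihj := ih hj
      have hstep : x ^ (j+1) - 1 = x * (x ^ j - 1) + (x - 1) := by ring
      have hmpos : (0:ℝ) < m := by exact_mod_cast hm
      have hjm : (j:ℝ) ≤ m := by exact_mod_cast hj
      calc Complex.abs (x ^ (j+1) - 1) ≤ Complex.abs (x * (x^j - 1)) + Complex.abs (x-1) := by
            rw [hstep]; exact Complex.abs.add_le _ _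
        _ = Complex.abs x * Complex.abs (x^j-1) + Complex.abs (x-1) := by rw [map_mul]
        _ ≤ (1 + 1/(2*m)) * (2 * j * Complex.abs (x-1)) + Complex.abs (x-1) := by
            have := Complex.abs.nonneg (x^j - 1)
            have := Complex.abs.nonneg x
            nlinarith [Complex.abs.nonneg (x-1)]
        _ ≤ 2 * (j+1) * Complex.abs (x-1) := by
            have h1 : 1/(2*(m:ℝ)) * (2 * j) ≤ 1 := by
              rw [div_mul_eq_mul_div, one_mul, div_le_one (by positivity)]; linarith
            nlinarith [Complex.abs.nonneg (x-1)]
        _ = 2 * (↑(j+1)) * Complex.abs (x-1) := by push_cast; ring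
  -- geometric sum
  have hsum : (∑ i ∈ Finset.range m, x ^ i) * (x - 1) = 0 := by
    rw [geom_sum_mul, hx, sub_self]
  have hx1 : x - 1 ≠ 0 := sub_ne_zero.mpr hne
  have hsum0 : (∑ i ∈ Finset.range m, x ^ i) = 0 := by
    rcases mul_eq_zero.mp hsum with h | h
    · exact h
    · exact absurd h hx1
  have hlow : Complex.abs ((∑ i ∈ Finset.range m, x ^ i) - m) ≤ 2*(m:ℝ)*((m:ℝ)-1) * Complex.abs (x-1) := by
    have : (∑ i ∈ Finset.range m, x ^ i) - m = ∑ i ∈ Finset.range m, (x ^ i - 1) := by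
      rw [Finset.sum_sub_distrib]; simp
    rw [this]
    calc Complex.abs (∑ i ∈ Finset.range m, (x ^ i - 1))
        ≤ ∑ i ∈ Finset.range m, Complex.abs (x ^ i - 1) := by
          simpa using Complex.abs.sum_le (Finset.range m) (fun i => x ^ i - 1)
      _ ≤ ∑ i ∈ Finset.range m, 2 * (i:ℝ) * Complex.abs (x-1) := by
          apply Finset.sum_le_sum
          intro i hi
          exact key i (le_of_lt (Finset.mem_range.mp hi))
      _ ≤ ∑ _i ∈ Finset.range m, 2 * ((m:ℝ)-1) * Complex.abs (x-1) := by
          apply Finset.sum_le_sum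
          intro i hi
          have : (i:ℝ) ≤ (m:ℝ) - 1 := by
            have : i + 1 ≤ m := Finset.mem_range.mp hi
            have : ((i:ℝ) + 1) ≤ m := by exact_mod_cast this
            linarith
          nlinarith [Complex.abs.nonneg (x-1)]
      _ = (m:ℝ) * (2 * ((m:ℝ)-1) * Complex.abs (x-1)) := by
          rw [Finset.sum_const, Finset.card_range]; simp [mul_comm]
      _ = 2 * (m:ℝ) * ((m:ℝ)-1) * Complex.abs (x-1) := by ring
  have hmpos : (0:ℝ) < m := by exact_mod_cast hm
  have hfinal : Complex.abs ((∑ i ∈ Finset.range m, x ^ i) - m) = m := by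
    rw [hsum0, zero_sub, Complex.abs.map_neg]
    exact Complex.abs_natCast m
  rw [hfinal] at hlow
  have : 2 * (m:ℝ) * ((m:ℝ)-1) * Complex.abs (x-1) ≤ 2 * (m:ℝ) * ((m:ℝ)-1) * (1/(2*m)) := by
    have hm1 : (1:ℝ) ≤ m := by exact_mod_cast hm
    have h1 : (0:ℝ) ≤ 2 * (m:ℝ) * ((m:ℝ)-1) := by nlinarith
    exact mul_le_mul_of_nonneg_left hd h1
  have h2 : 2 * (m:ℝ) * ((m:ℝ)-1) * (1/(2*m)) = (m:ℝ) - 1 := by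
    field_simp
  linarith

set_option maxHeartbeats 4000000 in
lemma lower_bound (c b : ℝ) (Z : ℂ) (hc : 0 < c) (hb : 0 < b) (hb' : b ≤ 1/60)
    (h1 : b - 1 - |c * Z.im| < c * Z.re) (h2 : c * Z.re < -b + |c * Z.im|) :
    (2/5) * b ≤ Complex.abs (1 - Complex.exp (-(2*Real.pi*Complex.I*(c:ℂ)*Z))) := by
  set w : ℂ := -(2*Real.pi*Complex.I*(c:ℂ)*Z) with hw
  have hwre : w.re = 2*Real.pi*(c*Z.im) := by
    simp [hw, Complex.mul_re, Complex.mul_im]; ring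
  have hwim : w.im = -(2*Real.pi*(c*Z.re)) := by
    simp [hw, Complex.mul_re, Complex.mul_im]; ring
  set X := c * Z.re with hX
  set Y := c * Z.im with hY
  have hπ := Real.pi_gt_three
  have hπ4 : Real.pi < 3.15 := by
    have := Real.pi_lt_d2; norm_num at this ⊢; linarith
  have habs : Complex.abs (Complex.exp w) = Real.exp (2*Real.pi*Y) := by
    rw [Complex.abs_exp, hwre]
  rcases le_or_gt (b/2) Y with hcase | hcase
  · -- Y ≥ b/2
    have : Real.exp (Real.pi * b) ≤ Real.exp (2*Real.pi*Y) := by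
      apply Real.exp_le_exp.mpr; nlinarith
    have h3 : Real.pi * b + 1 ≤ Real.exp (2*Real.pi*Y) := by
      have := Real.add_one_le_exp (Real.pi * b); linarith
    have h4 : ‖Complex.exp w‖ - ‖(1:ℂ)‖ ≤ ‖Complex.exp w - 1‖ := norm_sub_norm_le _ _
    rw [norm_sub_rev] at h4
    have h5 : ‖(1:ℂ) - Complex.exp w‖ = Complex.abs (1 - Complex.exp w) := rfl
    have h6 : ‖Complex.exp w‖ = Complex.abs (Complex.exp w) := rfl
    rw [h5, h6, habs] at h4
    simp only [norm_one] at h4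
    nlinarith
  rcases le_or_gt Y (-(b/2)) with hcase2 | hcase2
  · -- Y ≤ -b/2
    have hexple : Real.exp (2*Real.pi*Y) ≤ Real.exp (-(Real.pi*b)) := by
      apply Real.exp_le_exp.mpr; nlinarith
    have h0 : 1 + Real.pi*b ≤ Real.exp (Real.pi*b) := by
      have := Real.add_one_le_exp (Real.pi*b); linarith
    have hr : Real.exp (-(Real.pi*b)) ≤ 1/(1+Real.pi*b) := by
      rw [Real.exp_neg, inv_eq_one_div]
      apply one_div_le_one_div_of_le (by nlinarith) h0
    have h4 : ‖(1:ℂ)‖ - ‖Complex.exp w‖ ≤ ‖(1:ℂ) - Complex.exp w‖ := norm_sub_norm_le _ _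
    have h5 : ‖(1:ℂ) - Complex.exp w‖ = Complex.abs (1 - Complex.exp w) := rfl
    have h6 : ‖Complex.exp w‖ = Complex.abs (Complex.exp w) := rfl
    rw [h5, h6, habs] at h4
    simp only [norm_one] at h4
    have hb1 : 1/(1 + Real.pi*b) ≤ 1 - Real.pi*b/2 := by
      rw [div_le_iff₀ (by nlinarith)]
      nlinarith [mul_nonneg (by nlinarith : (0:ℝ) ≤ Real.pi*b) (by nlinarith : (0:ℝ) ≤ 1 - Real.pi*b)]
    nlinarith
  · -- |Y| < b/2
    have hYabs : |Y| < b/2 := abs_lt.mpr ⟨hcase2, hcase⟩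
    have hXlt : X < -(b/2) := by linarith
    have hXgt : b/2 - 1 < X := by linarith [abs_nonneg Y, neg_abs_le Y, le_abs_self Y]
    set R := Real.exp (2*Real.pi*Y) with hR
    have hRpos : 0 < R := Real.exp_pos _
    have hAre : (Complex.exp w).re = R * Real.cos w.im := by rw [Complex.exp_re, hwre]
    have hAim : (Complex.exp w).im = R * Real.sin w.im := by rw [Complex.exp_im, hwre]
    have hsq : (Complex.abs (1 - Complex.exp w))^2
        = (1 - R * Real.cos w.im)^2 + (R * Real.sin w.im)^2 := by
      rw [Complex.sq_abs, Complex.normSq_apply]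
      simp only [Complex.sub_re, Complex.sub_im, Complex.one_re, Complex.one_im, hAre, hAim]
      ring
    set S := Real.sin (Real.pi * X) ^ 2 with hS
    have hcosval : Real.cos w.im = 1 - 2 * S := by
      rw [hwim, Real.cos_neg]
      have he : 2*Real.pi*X = 2*(Real.pi*X) := by ring
      rw [he, Real.cos_two_mul]
      have := Real.sin_sq_add_cos_sq (Real.pi * X)
      rw [hS]; nlinarith
    have hsinw : (Real.sin w.im)^2 = 1 - (1 - 2*S)^2 := by
      have := Real.sin_sq_add_cos_sq w.im
      rw [hcosval] at this; linarith
    -- sin lower bound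
    have hsin : b ≤ Real.sin (Real.pi * (-X)) := by
      have hs1 : Real.pi * b/2 ≤ Real.pi * (-X) := by nlinarith
      have hs2 : Real.pi * (-X) ≤ Real.pi - Real.pi * b / 2 := by nlinarith
      rcases le_or_gt (Real.pi * (-X)) (Real.pi/2) with hhalf | hhalf
      · have hms := Real.mul_le_sin (x := Real.pi * (-X)) (by nlinarith) hhalf
        have hfrac : b ≤ 2/Real.pi * (Real.pi * (-X)) := by
          rw [div_mul_eq_mul_div, le_div_iff₀ (by linarith)]
          nlinarith
        linarith
      · rw [← Real.sin_pi_sub]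
        have hms := Real.mul_le_sin (x := Real.pi - Real.pi * (-X)) (by nlinarith) (by linarith)
        have hfrac : b ≤ 2/Real.pi * (Real.pi - Real.pi * (-X)) := by
          rw [div_mul_eq_mul_div, le_div_iff₀ (by linarith)]
          nlinarith
        linarith
    have hsin2 : b^2 ≤ S := by
      have hneg : Real.sin (Real.pi * X) = -Real.sin (Real.pi * (-X)) := by
        rw [← Real.sin_neg]; ring_nf
      rw [hS, hneg]
      nlinarith
    have hR9 : (9:ℝ)/10 ≤ R := by
      have h1' : -(Real.pi * b) ≤ 2*Real.pi*Y := by nlinarith [abs_lt.mp hYabs]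
      have h2' := Real.add_one_le_exp (-(Real.pi*b))
      have h3' := Real.exp_le_exp.mpr h1'
      rw [← hR] at h3'
      nlinarith
    clear_value w X Y R S
    have key : (1 - R*(1-2*S))^2 + R^2*(1 - (1-2*S)^2) = (1-R)^2 + 4*R*S := by ring
    have hfin : (2/5*b)^2 ≤ (Complex.abs (1 - Complex.exp w))^2 := by
      rw [hsq, hcosval]
      have : (R * Real.sin w.im)^2 = R^2 * (Real.sin w.im)^2 := by ring
      rw [this, hsinw, key]
      have hRS : (9:ℝ)/10 * b^2 ≤ R * S := by
        apply mul_le_mul hR9 hsin2 (sq_nonneg b) (le_of_lt hRpos)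
      have habstract : ∀ Rv Sv : ℝ, (9:ℝ)/10*b^2 ≤ Rv*Sv → (2/5*b)^2 ≤ (1-Rv)^2 + 4*Rv*Sv := by
        intro Rv Sv hRS'
        nlinarith [sq_nonneg (1-Rv), sq_nonneg b]
      exact habstract R S hRS
    exact le_of_pow_le_pow_left₀ two_ne_zero (Complex.abs.nonneg _) hfin

set_option maxHeartbeats 4000000 in
lemma key (r r' r0 : ℝ) (m : ℕ) (ε B : ℝ) (η : ℂ) (k : ℂ → ℂ) (g : ℂ → ℂ)
    (hr : 0 < r) (h2 : r < r') (h3 : r' < r0) (h4 : r0 < 1)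
    (hm : 1 ≤ m) (hε : 0 < ε) (hB : 0 < B)
    (E1 : ε ≤ r^m/10) (E2 : 16 * r^m ≤ r0^m) (E3 : (m:ℝ)^2 * r^m ≤ 1/100000)
    (E5a : B * ε ≤ 1/1000) (E5b : B * r^m ≤ 1/1000) (E7 : (m:ℝ)^2 * r'^m ≤ 1/100)
    (hη : Complex.abs η ≤ B * ε)
    (hkbd : ∀ z ∈ Metric.ball (0:ℂ) r0, Complex.abs (k z) ≤ B)
    (hg : ∀ z, g z = z + 2*Real.pi*Complex.I*(m:ℂ)*z*((ε:ℂ) - z^m)*(1 + η + ((ε:ℂ) - z^m)*k z))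
    (h : ℂ → ℂ) (hdiff : DifferentiableOn ℂ h (QnSet m ε))
    (heq : ∀ Z ∈ QnSet m ε, h Z ^ m =
      (ε:ℂ)/(1 - Complex.exp (-(2*Real.pi*Complex.I*(((m:ℝ)^2*ε : ℝ):ℂ)*Z))))
    (Z : ℂ) (hZ : Z ∈ QnSector m ε (1/(2*Real.pi*(m:ℝ)^2*r^m))) :
    h Z ∈ Metric.ball (0:ℂ) r0 ∧
    ∃ W ∈ Metric.ball Z (1/(2*Real.pi*(m:ℝ)^2*r'^m)),
      h W = g (h Z) ∧ Complex.abs (W - Z - 1) < 1/4 := by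
  have hπ := Real.pi_gt_three
  have hπ4 : Real.pi < 3.15 := by
    have := Real.pi_lt_d2; norm_num at this ⊢; linarith
  have hm1 : (1:ℝ) ≤ (m:ℝ) := by exact_mod_cast hm
  have hrm : (0:ℝ) < r^m := pow_pos hr m
  have hm2 : (1:ℝ) ≤ (m:ℝ)^2 := by nlinarith only [hm1]
  have hrm5 : r^m ≤ 1/100000 := by nlinarith only [E3, hrm, hm2]
  have hrm0 : (0:ℝ) < r0 := lt_trans (lt_trans hr h2) h3
  have hr'm : (0:ℝ) < r'^m := pow_pos (lt_trans hr h2) m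
  set c : ℝ := (m:ℝ)^2*ε with hc_def
  have hc : 0 < c := by positivity
  have hc_small : c ≤ 1/1000000 := by
    have : c ≤ (m:ℝ)^2*(r^m/10) := by
      rw [hc_def]; nlinarith only [E1, hm1]
    nlinarith only [this, E3, hm1]
  set a : ℝ := 1/(2*Real.pi*(m:ℝ)^2*r^m) with ha_def
  have ha : 0 < a := by positivity
  have ha3 : 3 ≤ a := by
    rw [ha_def, le_div_iff₀ (by positivity)]
    have h6 : 0 ≤ (m:ℝ)^2*r^m := by positivity
    nlinarith only [E3, hπ4, hπ, h6]
  set b : ℝ := ε/(2*Real.pi*r^m) with hb_def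
  have hb : 0 < b := by positivity
  have hb60 : b ≤ 1/60 := by
    rw [hb_def, div_le_div_iff₀ (by positivity) (by norm_num)]
    nlinarith only [E1, hπ, hrm]
  have hca : c * a = b := by
    rw [hc_def, ha_def, hb_def]
    field_simp
  -- sector inequalities
  obtain ⟨hS1, hS2⟩ := hZ
  have hZim : (Z - (a:ℂ) + ((1/((m:ℝ)^2*ε) : ℝ) : ℂ)).im = Z.im := by
    simp only [Complex.add_im, Complex.sub_im, Complex.ofReal_im]; ring
  have hZre : (Z - (a:ℂ) + ((1/((m:ℝ)^2*ε) : ℝ) : ℂ)).re = Z.re - a + 1/c := by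
    simp only [Complex.add_re, Complex.sub_re, Complex.ofReal_re]
    rfl
  have hZim2 : (Z + (a:ℂ)).im = Z.im := by
    simp only [Complex.add_im, Complex.ofReal_im]; ring
  have hZre2 : (Z + (a:ℂ)).re = Z.re + a := by
    simp only [Complex.add_re, Complex.ofReal_re]
  rw [hZim, hZre] at hS1
  rw [hZim2, hZre2] at hS2
  -- multiplied by c
  have habsc : |c * Z.im| = c * |Z.im| := by rw [abs_mul, abs_of_pos hc]
  have hc1 : c * (1/c) = 1 := by field_simp
  have hT1 : b - 1 - |c * Z.im| < c * Z.re := by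
    have h' : c * (-|Z.im|) < c * (Z.re - a + 1/c) := (mul_lt_mul_iff_right₀ hc).mpr hS1
    rw [habsc]
    nlinarith only [h', hc1, hca, hc]
  have hT2 : c * Z.re < -b + |c * Z.im| := by
    have h' : c * (Z.re + a) < c * |Z.im| := (mul_lt_mul_iff_right₀ hc).mpr hS2
    rw [habsc]
    nlinarith only [h', hca]
  -- lower bound for |1 - A|
  set A : ℂ := Complex.exp (-(2*Real.pi*Complex.I*((c:ℝ):ℂ)*Z)) with hA_def
  have hAlow : (2/5)*b ≤ Complex.abs (1 - A) := lower_bound c b Z hc hb hb60 hT1 hT2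
  have h1A : (1:ℂ) - A ≠ 0 := by
    intro hcontra
    rw [hcontra] at hAlow
    simp only [map_zero] at hAlow
    nlinarith only [hAlow, hb]
  -- Z ∈ QnSet
  have hZQ : Z ∈ QnSet m ε := by
    rcases lt_trichotomy Z.im 0 with hy | hy | hy
    · exact Or.inl (Or.inr hy)
    · refine Or.inr ⟨hy, ?_, ?_⟩
      · rw [hy] at hS1; simp only [abs_zero, neg_zero] at hS1
        have heq1 : 1/((m:ℝ)^2*ε) = 1/c := by rw [hc_def]
        rw [heq1]
        have : 0 < 1/c := by positivity
        nlinarith only [hS1, ha, this, one_div c ▸ hS1]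
      · rw [hy] at hS2; simp only [abs_zero] at hS2
        linarith only [hS2, ha]
    · exact Or.inl (Or.inl hy)
  -- the value z and its bounds
  set z : ℂ := h Z with hz_def
  have hzm : z^m = (ε:ℂ)/(1 - A) := by
    have hh := heq Z hZQ
    rw [← hz_def, ← hA_def] at hh
    exact hh
  have hzm_eq : z^m * (1 - A) = (ε:ℂ) := by
    rw [hzm]; field_simp
  have hεC : (ε:ℂ) ≠ 0 := by exact_mod_cast hε.ne'
  have habs_eps : Complex.abs ((ε:ℂ)) = ε := by
    rw [Complex.abs_ofReal, abs_of_pos hε]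
  have hzm_abs : Complex.abs (z^m) ≤ 5*Real.pi*r^m := by
    have h1 : Complex.abs (z^m) = ε / Complex.abs (1-A) := by
      rw [hzm, map_div₀, habs_eps]
    rw [h1]
    have hx2 : ε / Complex.abs (1-A) ≤ ε / ((2/5)*b) := by
      apply div_le_div_of_nonneg_left hε.le (by positivity) hAlow
    have hx3 : ε / ((2/5)*b) = 5*Real.pi*r^m := by
      rw [hb_def]; field_simp
    linarith only [hx2, hx3]
  have hz_ball : z ∈ Metric.ball (0:ℂ) r0 := by
    rw [Metric.mem_ball, dist_zero_right]
    show ‖z‖ < r0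
    by_contra hcon
    push_neg at hcon
    have hx1 : r0^m ≤ ‖z‖^m := pow_le_pow_left₀ hrm0.le hcon m
    have hx2 : ‖z‖^m = Complex.abs (z^m) := by
      rw [← norm_pow]; rfl
    nlinarith only [hzm_abs, hx1, hx2, E2, hπ4, hrm]
  refine ⟨hz_ball, ?_⟩
  -- z ≠ 0 and key identities
  have hA0 : A ≠ 0 := Complex.exp_ne_zero _
  have hz0 : z ≠ 0 := by
    intro h0
    rw [h0, zero_pow (by omega : m ≠ 0), zero_mul] at hzm_eq
    exact hεC hzm_eq.symm
  have hzm0 : z^m ≠ 0 := pow_ne_zero m hz0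
  have hkey : (ε:ℂ) - z^m = -(A*z^m) := by linear_combination -hzm_eq
  have hne : z^m - (ε:ℂ) ≠ 0 := by
    intro h0
    have hx : (ε:ℂ) - z^m = 0 := by linear_combination -h0
    rw [hkey] at hx
    simp only [neg_eq_zero, mul_eq_zero] at hx
    tauto
  set e0 : ℝ := Complex.abs ((ε:ℂ) - z^m) with he0_def
  have he0_pos : 0 < e0 := by
    rw [he0_def]
    exact AbsoluteValue.pos _ (by intro h0; exact hne (by linear_combination -h0))
  have habs_den : Complex.abs (z^m - (ε:ℂ)) = e0 := by
    rw [he0_def, ← Complex.abs.map_neg]; congr 1; ring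
  have he0 : e0 ≤ 17*r^m := by
    rw [he0_def]
    calc Complex.abs ((ε:ℂ) - z^m) ≤ Complex.abs ((ε:ℂ)) + Complex.abs (z^m) := by
          simpa [sub_eq_add_neg] using Complex.abs.add_le (ε:ℂ) (-(z^m))
      _ ≤ ε + 5*Real.pi*r^m := by
          rw [habs_eps]
          linarith only [hzm_abs]
      _ ≤ 17*r^m := by nlinarith only [E1, hπ4, hrm]
  have hm2e0 : (m:ℝ)^2*e0 ≤ 17/100000 := by
    calc (m:ℝ)^2*e0 ≤ (m:ℝ)^2*(17*r^m) := by
          apply mul_le_mul_of_nonneg_left he0 (by positivity)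
      _ = 17*((m:ℝ)^2*r^m) := by ring
      _ ≤ 17/100000 := by linarith only [E3]
  -- T
  set T : ℂ := 1 + η + ((ε:ℂ) - z^m) * k z with hT_def
  have hT1' : Complex.abs (T - 1) ≤ 1/50 := by
    have h1 : T - 1 = η + ((ε:ℂ) - z^m) * k z := by rw [hT_def]; ring
    rw [h1]
    calc Complex.abs (η + ((ε:ℂ) - z^m) * k z)
        ≤ Complex.abs η + Complex.abs ((ε:ℂ) - z^m) * Complex.abs (k z) := by
          simpa [map_mul] using Complex.abs.add_le η (((ε:ℂ) - z^m) * k z)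
      _ ≤ B*ε + e0 * B := by
          have hk1 := hkbd z hz_ball
          have hk2 := Complex.abs.nonneg (k z)
          rw [← he0_def]
          nlinarith only [hη, hk1, hk2, he0_pos]
      _ ≤ 1/50 := by nlinarith only [E5a, E5b, he0, hB, hrm]
  have hTabs : Complex.abs T ≤ 51/50 := by
    calc Complex.abs T = Complex.abs (T - 1 + 1) := by ring_nf
      _ ≤ Complex.abs (T-1) + 1 := by simpa using Complex.abs.add_le (T-1) 1
      _ ≤ 51/50 := by linarith only [hT1']
  -- u and L
  set u : ℂ := 2*Real.pi*Complex.I*(m:ℂ)*((ε:ℂ) - z^m)*T with hu_def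
  have hu_abs : Complex.abs u = 2*Real.pi*(m:ℝ)*e0*Complex.abs T := by
    rw [hu_def]
    simp only [map_mul, Complex.abs_ofReal, Complex.abs_I, Complex.abs_natCast,
      Complex.abs_two, ← he0_def]
    rw [abs_of_pos Real.pi_pos]
    ring
  have hu_le : Complex.abs u ≤ 7*((m:ℝ)*e0) := by
    rw [hu_abs]
    have hme0pos : (0:ℝ) < (m:ℝ)*e0 := by positivity
    calc 2*Real.pi*(m:ℝ)*e0*Complex.abs T ≤ 2*Real.pi*(m:ℝ)*e0*(51/50) := by
          apply mul_le_mul_of_nonneg_left hTabs (by positivity)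
      _ ≤ 7*((m:ℝ)*e0) := by nlinarith only [hπ4, hme0pos]
  have hmu : (m:ℝ)*Complex.abs u ≤ 1/500 := by
    calc (m:ℝ)*Complex.abs u ≤ (m:ℝ)*(7*((m:ℝ)*e0)) := by
          apply mul_le_mul_of_nonneg_left hu_le (by positivity)
      _ = 7*((m:ℝ)^2*e0) := by ring
      _ ≤ 7*(17/100000) := by linarith only [hm2e0]
      _ ≤ 1/500 := by norm_num
  have hu_small : Complex.abs u ≤ 1/500 := by
    nlinarith only [Complex.abs.nonneg u, hmu, hm1]
  have h1u : (1:ℂ) + u ≠ 0 := by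
    intro h0
    have hx : u = -1 := by linear_combination h0
    rw [hx] at hu_small
    simp only [Complex.abs.map_neg, map_one] at hu_small
    norm_num at hu_small
  set L : ℂ := Complex.log (1 + u) with hL_def
  obtain ⟨hLu, hLa⟩ := log_close (show Complex.abs u ≤ 1/2 by linarith only [hu_small])
  rw [← hL_def] at hLu hLa
  have hexpL : Complex.exp L = 1 + u := Complex.exp_log h1u
  have hmL : Complex.abs ((m:ℂ)*L) ≤ 2*((m:ℝ)*Complex.abs u) := by
    rw [map_mul, Complex.abs_natCast]
    nlinarith only [hLa, hm1, Complex.abs.nonneg L]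
  -- V
  set V : ℂ := 1 - Complex.exp (-((m:ℂ)*L)) with hV_def
  have hVmu : Complex.abs (V - (m:ℂ)*u) ≤ 5*((m:ℝ)*Complex.abs u)^2 := by
    have hy : Complex.abs (-((m:ℂ)*L)) ≤ 1 := by
      rw [Complex.abs.map_neg]
      linarith only [hmL, hmu]
    have hb1 := Complex.abs_exp_sub_one_sub_id_le hy
    have hb2 : V - (m:ℂ)*u = -(Complex.exp (-((m:ℂ)*L)) - 1 - (-((m:ℂ)*L))) + (m:ℂ)*(L - u) := by
      rw [hV_def]; ring
    rw [hb2]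
    calc Complex.abs _ ≤ Complex.abs (Complex.exp (-((m:ℂ)*L)) - 1 - (-((m:ℂ)*L)))
          + Complex.abs ((m:ℂ)*(L-u)) := by
          have t1 := Complex.abs.add_le
            (-(Complex.exp (-((m:ℂ)*L)) - 1 - (-((m:ℂ)*L)))) ((m:ℂ)*(L-u))
          rwa [Complex.abs.map_neg] at t1
      _ ≤ Complex.abs (-((m:ℂ)*L))^2 + (m:ℝ)*Complex.abs u^2 := by
          have t2 : (m:ℝ)*Complex.abs (L-u) ≤ (m:ℝ)*(Complex.abs u^2) :=
            mul_le_mul_of_nonneg_left hLu (by positivity)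
          rw [map_mul, Complex.abs_natCast]
          linarith only [hb1, t2]
      _ ≤ 5*((m:ℝ)*Complex.abs u)^2 := by
          rw [Complex.abs.map_neg]
          have h3 : Complex.abs ((m:ℂ)*L)^2 ≤ (2*((m:ℝ)*Complex.abs u))^2 := by
            apply pow_le_pow_left₀ (Complex.abs.nonneg _) hmL
          have h4 : (m:ℝ)*Complex.abs u^2 ≤ ((m:ℝ)*Complex.abs u)^2 := by
            nlinarith only [Complex.abs.nonneg u, hm1]
          nlinarith only [h3, h4]
  -- D
  set D : ℂ := (ε:ℂ)*V/(z^m - (ε:ℂ)) with hD_def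
  have hcC : ((c:ℝ):ℂ) = ((m:ℝ):ℂ)^2*((ε:ℝ):ℂ) := by
    rw [hc_def]; push_cast; ring
  have hmC : ((m:ℝ):ℂ) = (m:ℂ) := by push_cast; ring
  have hDT : Complex.abs (D + 2*Real.pi*Complex.I*((c:ℝ):ℂ)*T) ≤ (1/20)*c := by
    have hid : D + 2*Real.pi*Complex.I*((c:ℝ):ℂ)*T = (ε:ℂ)*(V - (m:ℂ)*u)/(z^m - (ε:ℂ)) := by
      rw [hD_def, hcC, hmC, hu_def]
      field_simp
      ring
    rw [hid, map_div₀, map_mul, habs_eps, habs_den]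
    rw [div_le_iff₀ he0_pos]
    have hstep : ε * Complex.abs (V - (m:ℂ)*u) ≤ ε * (5*((m:ℝ)*Complex.abs u)^2) :=
      mul_le_mul_of_nonneg_left hVmu hε.le
    have hstep2 : ((m:ℝ)*Complex.abs u)^2 ≤ (7*((m:ℝ)^2*e0))^2 := by
      have hx : (m:ℝ)*Complex.abs u ≤ 7*((m:ℝ)^2*e0) := by
        calc (m:ℝ)*Complex.abs u ≤ (m:ℝ)*(7*((m:ℝ)*e0)) :=
              mul_le_mul_of_nonneg_left hu_le (by positivity)
          _ = 7*((m:ℝ)^2*e0) := by ring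
      exact pow_le_pow_left₀ (by positivity) hx 2
    have hstep3 : ε * (5*((m:ℝ)*Complex.abs u)^2) ≤ ε * (245*((m:ℝ)^2*e0)^2) := by
      apply mul_le_mul_of_nonneg_left _ hε.le
      nlinarith only [hstep2]
    have hstep4 : ε * (245*((m:ℝ)^2*e0)^2) ≤ 1/20*c*e0 := by
      have hq : ε * (245*((m:ℝ)^2*e0)^2) = 245*((m:ℝ)^2*e0)*(c*e0) := by
        rw [hc_def]; ring
      rw [hq]
      have hce0 : 0 < c*e0 := mul_pos hc he0_pos
      nlinarith only [hm2e0, hce0]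
    linarith only [hstep, hstep3, hstep4]
  have habs2πcT : Complex.abs (2*Real.pi*Complex.I*((c:ℝ):ℂ)*T) ≤ (2*Real.pi*c)*(51/50) := by
    have : Complex.abs (2*Real.pi*Complex.I*((c:ℝ):ℂ)*T)
        = 2*Real.pi*c*Complex.abs T := by
      simp only [map_mul, Complex.abs_ofReal, Complex.abs_I, Complex.abs_two]
      rw [abs_of_pos Real.pi_pos, abs_of_pos hc]
      ring
    rw [this]
    exact mul_le_mul_of_nonneg_left hTabs (by positivity)
  have hD_abs : Complex.abs D ≤ 7*c := by
    have t1 : Complex.abs D ≤ Complex.abs (D + 2*Real.pi*Complex.I*((c:ℝ):ℂ)*T)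
        + Complex.abs (2*Real.pi*Complex.I*((c:ℝ):ℂ)*T) := by
      have := Complex.abs.add_le (D + 2*Real.pi*Complex.I*((c:ℝ):ℂ)*T)
        (-(2*Real.pi*Complex.I*((c:ℝ):ℂ)*T))
      simpa [Complex.abs.map_neg] using this
    have : (2*Real.pi*c)*(51/50) ≤ 6.5*c := by nlinarith only [hπ4, hc]
    linarith only [t1, hDT, habs2πcT, this, hc]
  have hD_small : Complex.abs D ≤ 1/100 := by
    calc Complex.abs D ≤ 7*c := hD_abs
      _ ≤ 1/100 := by linarith only [hc_small]
  have hR0 : (1:ℂ) + D ≠ 0 := by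
    intro h0
    have hx : D = -1 := by linear_combination h0
    rw [hx] at hD_small
    simp only [Complex.abs.map_neg, map_one] at hD_small
    norm_num at hD_small
  set LR : ℂ := Complex.log (1 + D) with hLR_def
  obtain ⟨hLRD, hLRa⟩ := log_close (show Complex.abs D ≤ 1/2 by linarith only [hD_small])
  rw [← hLR_def] at hLRD hLRa
  have hexpLR : Complex.exp LR = 1 + D := Complex.exp_log hR0
  -- Δ
  have h2πc0 : (2*Real.pi*Complex.I*((c:ℝ):ℂ)) ≠ 0 := by
    apply mul_ne_zero (mul_ne_zero (mul_ne_zero two_ne_zero ?_) Complex.I_ne_zero) ?_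
    · exact Complex.ofReal_ne_zero.mpr Real.pi_ne_zero
    · exact Complex.ofReal_ne_zero.mpr hc.ne'
  set Δ : ℂ := -LR/(2*Real.pi*Complex.I*((c:ℝ):ℂ)) with hΔ_def
  have hΔeq : -(2*Real.pi*Complex.I*((c:ℝ):ℂ)*Δ) = LR := by
    have hc0C : ((c:ℝ):ℂ) ≠ 0 := Complex.ofReal_ne_zero.mpr hc.ne'
    rw [hΔ_def]; field_simp
  have habs2πc : Complex.abs (2*Real.pi*Complex.I*((c:ℝ):ℂ)) = 2*Real.pi*c := by
    simp only [map_mul, Complex.abs_ofReal, Complex.abs_I, Complex.abs_two]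
    rw [abs_of_pos Real.pi_pos, abs_of_pos hc]
    ring
  have hΔ1 : Complex.abs (Δ - 1) ≤ 1/30 := by
    have hid : Δ - 1 = -(LR + 2*Real.pi*Complex.I*((c:ℝ):ℂ))/(2*Real.pi*Complex.I*((c:ℝ):ℂ)) := by
      have hc0C : ((c:ℝ):ℂ) ≠ 0 := Complex.ofReal_ne_zero.mpr hc.ne'
      rw [hΔ_def]; field_simp; ring
    have hnum : Complex.abs (LR + 2*Real.pi*Complex.I*((c:ℝ):ℂ)) ≤ (1/5)*c := by
      have hsplit : LR + 2*Real.pi*Complex.I*((c:ℝ):ℂ)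
          = (LR - D) + (D + 2*Real.pi*Complex.I*((c:ℝ):ℂ)*T)
            + 2*Real.pi*Complex.I*((c:ℝ):ℂ)*(1 - T) := by ring
      rw [hsplit]
      have t1 := Complex.abs.add_le
        ((LR - D) + (D + 2*Real.pi*Complex.I*((c:ℝ):ℂ)*T))
        (2*Real.pi*Complex.I*((c:ℝ):ℂ)*(1 - T))
      have t2 := Complex.abs.add_le (LR - D) (D + 2*Real.pi*Complex.I*((c:ℝ):ℂ)*T)
      have t3 : Complex.abs (2*Real.pi*Complex.I*((c:ℝ):ℂ)*(1 - T)) ≤ (2*Real.pi*c)*(1/50) := by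
        rw [map_mul, habs2πc]
        have : Complex.abs (1 - T) = Complex.abs (T - 1) := by
          rw [← Complex.abs.map_neg]; congr 1; ring
        rw [this]
        exact mul_le_mul_of_nonneg_left hT1' (by positivity)
      have t4 : Complex.abs (LR - D) ≤ (1/100)*c := by
        calc Complex.abs (LR - D) ≤ Complex.abs D^2 := hLRD
          _ ≤ (1/100)*c := by nlinarith only [hD_abs, hc, hc_small, Complex.abs.nonneg D]
      have t5 : (2*Real.pi*c)*(1/50) ≤ (0.13:ℝ)*c := by nlinarith only [hπ4, hc]
      linarith only [t1, t2, t3, t4, t5, hDT, hc]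
    rw [hid, map_div₀, Complex.abs.map_neg, habs2πc]
    rw [div_le_iff₀ (by positivity)]
    calc Complex.abs (LR + 2*Real.pi*Complex.I*((c:ℝ):ℂ)) ≤ (1/5)*c := hnum
      _ ≤ 1/30*(2*Real.pi*c) := by nlinarith only [hπ, hc]
  have hΔabs : Complex.abs Δ ≤ 31/30 := by
    calc Complex.abs Δ = Complex.abs (Δ - 1 + 1) := by ring_nf
      _ ≤ Complex.abs (Δ-1) + 1 := by simpa using Complex.abs.add_le (Δ-1) 1
      _ ≤ 31/30 := by linarith only [hΔ1]
  -- W and the ball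
  set W : ℂ := Z + Δ with hW_def
  have hWball : W ∈ Metric.ball Z (1/(2*Real.pi*(m:ℝ)^2*r'^m)) := by
    rw [Metric.mem_ball, Complex.dist_eq, hW_def]
    have : Z + Δ - Z = Δ := by ring
    rw [this]
    have hlt : Complex.abs Δ < 1/(2*Real.pi*(m:ℝ)^2*r'^m) := by
      rw [lt_div_iff₀ (by positivity)]
      have : Complex.abs Δ * (2*Real.pi*(m:ℝ)^2*r'^m) ≤ (31/30)*(2*Real.pi*((m:ℝ)^2*r'^m)) := by
        have h1 : (0:ℝ) ≤ 2*Real.pi*(m:ℝ)^2*r'^m := by positivity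
        nlinarith only [hΔabs, h1, Complex.abs.nonneg Δ, Real.pi_pos, mul_pos (mul_pos (by norm_num : (0:ℝ)<2) Real.pi_pos) (mul_pos (show (0:ℝ) < (m:ℝ)^2 by positivity) hr'm)]
      have h2 : (31/30)*(2*Real.pi*((m:ℝ)^2*r'^m)) ≤ (31/30)*(2*3.15*(1/100)) := by
        have := mul_le_mul (le_of_lt hπ4) E7 (by positivity) (by norm_num)
        nlinarith only [this, Real.pi_pos, E7, hπ4, hr'm]
      linarith only [this, h2]
    exact hlt
  have hWZ1 : Complex.abs (W - Z - 1) < 1/4 := by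
    have : W - Z - 1 = Δ - 1 := by rw [hW_def]; ring
    rw [this]
    linarith only [hΔ1]
  -- the path
  have hmC0 : (m:ℂ) ≠ 0 := Nat.cast_ne_zero.mpr (by omega)
  set θ : ℂ := 2*Real.pi*Complex.I*((c:ℝ):ℂ)*Δ with hθ_def
  have hexpθ : Complex.exp (-θ) = 1 + D := by
    rw [hθ_def, hΔeq, hexpLR]
  have hθabs : Complex.abs θ ≤ 7*c := by
    rw [hθ_def, map_mul, habs2πc]
    calc 2*Real.pi*c*Complex.abs Δ ≤ 2*Real.pi*c*(31/30) :=
          mul_le_mul_of_nonneg_left hΔabs (by positivity)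
      _ ≤ 7*c := by nlinarith only [hπ4, hc]
  set Zt : ℝ → ℂ := fun t => Z + (t:ℂ)*Δ with hZt_def
  set Et : ℝ → ℂ := fun t => Complex.exp (-((t:ℂ)*θ)) with hEt_def
  have hAe : ∀ t : ℝ, Complex.exp (-(2*Real.pi*Complex.I*((c:ℝ):ℂ)*(Zt t))) = A * Et t := by
    intro t
    simp only [hZt_def, hEt_def, hA_def]
    rw [← Complex.exp_add]
    congr 1
    rw [hθ_def]; ring
  have hEtabs : ∀ t ∈ Icc (0:ℝ) 1, Complex.abs (1 - Et t) ≤ 14*c := by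
    intro t ht
    have habs_tθ : Complex.abs ((t:ℂ)*θ) ≤ 7*c := by
      rw [map_mul, Complex.abs_ofReal, _root_.abs_of_nonneg ht.1]
      calc t * Complex.abs θ ≤ 1*(7*c) :=
            mul_le_mul ht.2 hθabs (Complex.abs.nonneg θ) zero_le_one
        _ = 7*c := one_mul _
    have h1 : Complex.abs (-((t:ℂ)*θ)) ≤ 1 := by
      rw [Complex.abs.map_neg]
      linarith only [habs_tθ, hc_small]
    have h2 := Complex.abs_exp_sub_one_le h1
    have h3 : Complex.abs (1 - Et t) = Complex.abs (Complex.exp (-((t:ℂ)*θ)) - 1) := by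
      simp only [hEt_def]
      rw [← Complex.abs.map_neg]
      congr 1; ring
    rw [h3]
    calc Complex.abs (Complex.exp (-((t:ℂ)*θ)) - 1) ≤ 2*Complex.abs (-((t:ℂ)*θ)) := h2
      _ ≤ 14*c := by
          rw [Complex.abs.map_neg]
          linarith only [habs_tθ]
  set gt : ℝ → ℂ := fun t => (z^m - (ε:ℂ))*(1 - Et t)/(ε:ℂ) with hgt_def
  have hgt_abs : ∀ t ∈ Icc (0:ℝ) 1, Complex.abs (gt t) ≤ 1/100 := by
    intro t ht
    simp only [hgt_def]
    rw [map_div₀, map_mul, habs_den, habs_eps]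
    rw [div_le_iff₀ hε]
    calc e0 * Complex.abs (1 - Et t) ≤ e0 * (14*c) :=
          mul_le_mul_of_nonneg_left (hEtabs t ht) he0_pos.le
      _ = 14*((m:ℝ)^2*e0)*ε := by rw [hc_def]; ring
      _ ≤ 1/100*ε := by nlinarith only [hm2e0, hε]
  have h1gt0 : ∀ t ∈ Icc (0:ℝ) 1, (1:ℂ) + gt t ≠ 0 := by
    intro t ht h0
    have hx : gt t = -1 := by linear_combination h0
    have := hgt_abs t ht
    rw [hx] at this
    simp only [Complex.abs.map_neg, map_one] at this
    norm_num at this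
  have h1gt_lower : ∀ t ∈ Icc (0:ℝ) 1, (99:ℝ)/100 ≤ Complex.abs (1 + gt t) := by
    intro t ht
    have tri : Complex.abs ((1 + gt t) + (-(gt t))) ≤ Complex.abs (1 + gt t) + Complex.abs (-(gt t)) :=
      Complex.abs.add_le _ _
    have hid : (1 + gt t) + (-(gt t)) = 1 := by ring
    rw [hid, map_one, Complex.abs.map_neg] at tri
    linarith only [tri, hgt_abs t ht]
  set Qt : ℝ → ℂ := fun t => 1/(1 + gt t) with hQt_def
  have hQt0 : ∀ t ∈ Icc (0:ℝ) 1, Qt t ≠ 0 := by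
    intro t ht
    simp only [hQt_def]
    exact one_div_ne_zero (h1gt0 t ht)
  have hQnear : ∀ t ∈ Icc (0:ℝ) 1, Complex.abs (Qt t - 1) ≤ 1/50 := by
    intro t ht
    have hid : Qt t - 1 = -(gt t)/(1 + gt t) := by
      simp only [hQt_def]
      rw [eq_div_iff (h1gt0 t ht), sub_mul, one_div_mul_cancel (h1gt0 t ht)]
      ring
    rw [hid, map_div₀, Complex.abs.map_neg]
    rw [div_le_iff₀ (by linarith only [h1gt_lower t ht] : (0:ℝ) < Complex.abs (1 + gt t))]
    calc Complex.abs (gt t) ≤ 1/100 := hgt_abs t ht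
      _ ≤ 1/50*(99/100) := by norm_num
      _ ≤ 1/50*Complex.abs (1 + gt t) := by
          have := h1gt_lower t ht
          nlinarith only [this]
  have hQre : ∀ t ∈ Icc (0:ℝ) 1, 0 < (Qt t).re := by
    intro t ht
    have h1 : |(Qt t - 1).re| ≤ Complex.abs (Qt t - 1) := Complex.abs_re_le_abs _
    have h2 : (Qt t - 1).re = (Qt t).re - 1 := by
      simp [Complex.sub_re]
    have := hQnear t ht
    rw [h2] at h1
    have := abs_le.mp (le_trans h1 this)
    linarith only [this.1]
  have hden_t : ∀ t ∈ Icc (0:ℝ) 1, (1:ℂ) - A*Et t = (1 - A)*(1 + gt t) := by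
    intro t ht
    have expand : (1 - A)*((ε:ℂ) + (z^m - (ε:ℂ))*(1 - Et t)) = (1 - A*Et t)*(ε:ℂ) := by
      linear_combination (1 - Et t) * hzm_eq
    calc (1:ℂ) - A*Et t = ((1 - A*Et t)*(ε:ℂ))/(ε:ℂ) := by
          rw [mul_div_cancel_right₀ _ hεC]
      _ = ((1-A)*((ε:ℂ) + (z^m-(ε:ℂ))*(1-Et t)))/(ε:ℂ) := by rw [expand]
      _ = (1-A)*(1 + gt t) := by
          simp only [hgt_def]
          field_simp
  have hdenne : ∀ t ∈ Icc (0:ℝ) 1, (1:ℂ) - A*Et t ≠ 0 := by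
    intro t ht
    rw [hden_t t ht]
    exact mul_ne_zero h1A (h1gt0 t ht)
  have hPt : ∀ t ∈ Icc (0:ℝ) 1, (ε:ℂ)/(1 - A*Et t) = z^m * Qt t := by
    intro t ht
    rw [hden_t t ht]
    simp only [hQt_def]
    rw [eq_comm, mul_one_div, div_eq_div_iff (h1gt0 t ht) (mul_ne_zero h1A (h1gt0 t ht))]
    linear_combination (1 + gt t) * hzm_eq
  set ρ : ℝ → ℂ := fun t => z * Complex.exp (Complex.log (Qt t)/(m:ℂ)) with hρ_def
  have hρ0 : ∀ t, ρ t ≠ 0 := by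
    intro t
    simp only [hρ_def]
    exact mul_ne_zero hz0 (Complex.exp_ne_zero _)
  have hρpow : ∀ t ∈ Icc (0:ℝ) 1, (ρ t)^m = z^m * Qt t := by
    intro t ht
    simp only [hρ_def]
    rw [mul_pow, ← Complex.exp_nat_mul]
    congr 1
    rw [mul_div_cancel₀ _ hmC0]
    exact Complex.exp_log (hQt0 t ht)
  -- geometry: path stays in QnSet
  have hΔim : |Δ.im| ≤ 1/30 := by
    have h1 : Δ.im = (Δ - 1).im := by simp [Complex.sub_im]
    rw [h1]
    exact le_trans (Complex.abs_im_le_abs _) hΔ1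
  have hΔre : |Δ.re - 1| ≤ 1/30 := by
    have h1 : Δ.re - 1 = (Δ - 1).re := by simp [Complex.sub_re]
    rw [h1]
    exact le_trans (Complex.abs_re_le_abs _) hΔ1
  have hZtQ : ∀ t ∈ Icc (0:ℝ) 1, Zt t ∈ QnSet m ε := by
    intro t ht
    have him_eq : (Zt t).im = Z.im + t*Δ.im := by
      simp [hZt_def, Complex.add_im, Complex.mul_im, Complex.ofReal_re, Complex.ofReal_im]
    have hre_eq : (Zt t).re = Z.re + t*Δ.re := by
      simp [hZt_def, Complex.add_re, Complex.mul_re, Complex.ofReal_re, Complex.ofReal_im]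
    rcases eq_or_ne ((Zt t).im) 0 with him | him
    · refine Or.inr ⟨him, ?_, ?_⟩
      all_goals
        have hZim_small : |Z.im| ≤ 1/30 := by
          have h0 : Z.im = -(t*Δ.im) := by
            rw [him_eq] at him
            linarith only [him]
          rw [h0, abs_neg, abs_mul]
          have h1 : |t| ≤ 1 := by rw [_root_.abs_of_nonneg ht.1]; exact ht.2
          nlinarith only [h1, hΔim, abs_nonneg t, abs_nonneg Δ.im]
      · -- lower bound
        have h5 : a - 1/c - 1/30 < Z.re := by
          have := abs_lt.mp (lt_of_le_of_lt hZim_small (by norm_num : (1:ℝ)/30 < 1/29))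
          have h6 := neg_abs_le Z.im
          have h7 := le_abs_self Z.im
          linarith only [hS1, hZim_small, h6, h7, abs_nonneg Z.im]
        have h8 : 0 ≤ t*Δ.re := by
          have := abs_le.mp hΔre
          nlinarith only [ht.1, ht.2, this.1]
        have h9 : 1/((m:ℝ)^2*ε) = 1/c := by rw [hc_def]
        rw [hre_eq, h9]
        have h10 : 0 < 1/c := by positivity
        linarith only [h5, h8, ha3, h10]
      · -- upper bound
        have h5 : Z.re < -a + 1/30 := by
          have h7 := le_abs_self Z.im
          have h6 := neg_abs_le Z.im
          linarith only [hS2, hZim_small, h6, h7]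
        have h8 : t*Δ.re ≤ 31/30 := by
          have := abs_le.mp hΔre
          have h1 : |t| ≤ 1 := by rw [_root_.abs_of_nonneg ht.1]; exact ht.2
          nlinarith only [ht.1, ht.2, this.2]
        rw [hre_eq]
        linarith only [h5, h8, ha3]
    · rcases lt_or_gt_of_ne him with h' | h'
      · exact Or.inl (Or.inr h')
      · exact Or.inl (Or.inl h')
  have hhZt_pow : ∀ t ∈ Icc (0:ℝ) 1, (h (Zt t))^m = z^m * Qt t := by
    intro t ht
    have h1 := heq (Zt t) (hZtQ t ht)
    rw [hAe t] at h1
    rw [h1]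
    exact hPt t ht
  set ψ : ℝ → ℂ := fun t => h (Zt t)/ρ t with hψ_def
  have hψpow : ∀ t ∈ Icc (0:ℝ) 1, (ψ t)^m = 1 := by
    intro t ht
    simp only [hψ_def]
    rw [div_pow, hhZt_pow t ht, hρpow t ht]
    exact div_self (mul_ne_zero hzm0 (hQt0 t ht))
  have hEt0 : Et 0 = 1 := by
    simp only [hEt_def]
    norm_num
  have hZt0 : Zt 0 = Z := by simp [hZt_def]
  have hgt0 : gt 0 = 0 := by
    simp only [hgt_def]
    rw [hEt0]
    simp
  have hQt00 : Qt 0 = 1 := by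
    simp only [hQt_def]
    rw [hgt0]
    norm_num
  have hρ00 : ρ 0 = z := by
    simp only [hρ_def]
    rw [hQt00, Complex.log_one, zero_div, Complex.exp_zero, mul_one]
  have hψ0 : ψ 0 = 1 := by
    simp only [hψ_def]
    rw [hZt0, hρ00, ← hz_def]
    exact div_self hz0
  -- continuity
  have hZt_cont : Continuous Zt := by
    rw [hZt_def]
    exact continuous_const.add (Complex.continuous_ofReal.mul continuous_const)
  have hEt_cont : Continuous Et := by
    rw [hEt_def]
    exact Complex.continuous_exp.comp ((Complex.continuous_ofReal.mul continuous_const).neg)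
  have hgt_cont : Continuous gt := by
    rw [hgt_def]
    exact (continuous_const.mul (continuous_const.sub hEt_cont)).div_const _
  have hQt_cont : ContinuousOn Qt (Icc (0:ℝ) 1) := by
    rw [hQt_def]
    exact ContinuousOn.div continuousOn_const
      (continuous_const.add hgt_cont).continuousOn (fun t ht => h1gt0 t ht)
  have hlogQ_cont : ContinuousOn (fun t => Complex.log (Qt t)) (Icc (0:ℝ) 1) := by
    intro t ht
    exact (continuousAt_clog (Complex.mem_slitPlane_iff.mpr (Or.inl (hQre t ht)))).comp_continuousWithinAt
      (hQt_cont t ht)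
  have hρ_cont : ContinuousOn ρ (Icc (0:ℝ) 1) := by
    rw [hρ_def]
    exact continuousOn_const.mul
      (Complex.continuous_exp.comp_continuousOn (hlogQ_cont.div_const _))
  have hh_cont : ContinuousOn (fun t => h (Zt t)) (Icc (0:ℝ) 1) :=
    (hdiff.continuousOn.comp hZt_cont.continuousOn (fun t ht => hZtQ t ht))
  have hψ_cont : ContinuousOn ψ (Icc (0:ℝ) 1) := by
    rw [hψ_def]
    exact hh_cont.div hρ_cont (fun t ht => hρ0 t)
  -- clopen argument
  haveI : PreconnectedSpace (Icc (0:ℝ) 1) := Subtype.preconnectedSpace isPreconnected_Icc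
  set F : (Icc (0:ℝ) 1) → ℂ := fun s => ψ s.1 with hF_def
  have hFc : Continuous F := hψ_cont.restrict
  have hFpow : ∀ s : (Icc (0:ℝ) 1), (F s)^m = 1 := fun s => hψpow s.1 s.2
  set U : Set (Icc (0:ℝ) 1) := F ⁻¹' {1} with hU_def
  have hUclosed : IsClosed U := IsClosed.preimage hFc isClosed_singleton
  have hUopen : IsOpen U := by
    rw [isOpen_iff_mem_nhds]
    intro s hs
    have hs1 : F s = 1 := hs
    have hpos : (0:ℝ) < 1/(2*m) := by positivity
    have hball : F ⁻¹' (Metric.ball (1:ℂ) (1/(2*m))) ∈ nhds s := by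
      apply hFc.continuousAt.preimage_mem_nhds
      apply Metric.isOpen_ball.mem_nhds
      rw [hs1]
      exact Metric.mem_ball_self hpos
    apply Filter.mem_of_superset hball
    intro s' hs'
    have hd : Complex.abs (F s' - 1) ≤ 1/(2*m) := by
      have := hs'
      rw [Set.mem_preimage, Metric.mem_ball, Complex.dist_eq] at this
      exact this.le
    exact root_sep hm (hFpow s') hd
  have hUne : U.Nonempty := by
    refine ⟨⟨0, by norm_num⟩, ?_⟩
    show F ⟨0, by norm_num⟩ = 1
    rw [hF_def]
    exact hψ0
  have hUuniv : U = Set.univ := IsClopen.eq_univ ⟨hUclosed, hUopen⟩ hUne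
  have hψ1 : ψ 1 = 1 := by
    have hmem : (⟨1, by norm_num⟩ : (Icc (0:ℝ) 1)) ∈ U := by
      rw [hUuniv]; trivial
    exact hmem
  -- compute ρ 1
  have hEt1 : Et 1 = 1 + D := by
    simp only [hEt_def]
    rw [Complex.ofReal_one, one_mul]
    exact hexpθ
  have hgt1 : gt 1 = -V := by
    simp only [hgt_def]
    rw [hEt1, hD_def]
    field_simp
    ring
  have hQt1 : Qt 1 = Complex.exp ((m:ℂ)*L) := by
    simp only [hQt_def]
    rw [hgt1, hV_def]
    have hxx : (1:ℂ) + -(1 - Complex.exp (-((m:ℂ)*L))) = Complex.exp (-((m:ℂ)*L)) := by ring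
    rw [hxx, one_div, ← Complex.exp_neg, neg_neg]
  have hlogQt1 : Complex.log (Qt 1) = (m:ℂ)*L := by
    rw [hQt1]
    apply Complex.log_exp
    · have h1 : |((m:ℂ)*L).im| ≤ Complex.abs ((m:ℂ)*L) := Complex.abs_im_le_abs _
      have h2 := abs_le.mp (le_trans h1 (le_trans hmL (by linarith only [hmu] : 2*((m:ℝ)*Complex.abs u) ≤ 1/250)))
      linarith only [h2.1, hπ]
    · have h1 : |((m:ℂ)*L).im| ≤ Complex.abs ((m:ℂ)*L) := Complex.abs_im_le_abs _
      have h2 := abs_le.mp (le_trans h1 (le_trans hmL (by linarith only [hmu] : 2*((m:ℝ)*Complex.abs u) ≤ 1/250)))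
      linarith only [h2.2, hπ]
  have hρ1 : ρ 1 = z*(1+u) := by
    simp only [hρ_def]
    rw [hlogQt1, mul_div_cancel_left₀ _ hmC0, hexpL]
  have hZt1 : Zt 1 = W := by
    simp only [hZt_def]
    rw [Complex.ofReal_one, one_mul, hW_def]
  have hWQ : h W = g z := by
    have h1 : h (Zt 1)/ρ 1 = 1 := hψ1
    have h2 : h (Zt 1) = ρ 1 := by
      rw [div_eq_one_iff_eq (hρ0 1)] at h1
      exact h1
    rw [hZt1] at h2
    rw [h2, hρ1, hg z, hu_def, hT_def]
    ring
  exact ⟨W, hWball, hWQ, hWZ1⟩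

/-- Lemma 3.1(b). With `1/A < r < r' < r_0 < 1`, `ε_n^{1/q_n} → 1/A`,
`limsup B_n^{1/q_n} ≤ 1`, `|η_n| ≤ B_n ε_n`, `k_n` holomorphic on `D_{r_0}` with `|k_n| ≤ B_n`,
and `g_n(z) = z + 2πi q_n z(ε_n − z^{q_n})(1 + η_n + (ε_n − z^{q_n})k_n(z))`: for all large `n`,
every branch `h` of the `q_n`-th root of `ε_n/(1 − e^{−2πiq_n²ε_nZ})` on `Q_n`, and every
`Z ∈ Q_n(1/(2πq_n²r^{q_n}))`, satisfy `h(Z) ∈ D_{r_0}` and there is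
`W ∈ B(Z, 1/(2πq_n²r'^{q_n}))` with `h(W) = g_n(h(Z))` and `|W − Z − 1| < 1/4`. -/
theorem statement16 (invA r r' r0 : ℝ)
    (h0 : 0 ≤ invA) (h1 : invA < r) (h2 : r < r') (h3 : r' < r0) (h4 : r0 < 1)
    (q : ℕ → ℕ) (hq : ∀ n, 0 < q n) (hqtop : Tendsto q atTop atTop)
    (ε : ℕ → ℝ) (hε : ∀ n, 0 < ε n)
    (hεlim : Tendsto (fun n => (ε n) ^ (1 / (q n : ℝ))) atTop (nhds invA))
    (B : ℕ → ℝ) (hB : ∀ n, 0 < B n)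
    (hBlim : Filter.limsup
      (fun n => ENNReal.ofReal ((B n) ^ (1 / (q n : ℝ)))) Filter.atTop ≤ 1)
    (η : ℕ → ℂ) (hη : ∀ n, ‖η n‖ ≤ B n * ε n)
    (k : ℕ → ℂ → ℂ) (hkdiff : ∀ n, DifferentiableOn ℂ (k n) (Metric.ball 0 r0))
    (hkbd : ∀ n, ∀ z ∈ Metric.ball (0 : ℂ) r0, ‖k n z‖ ≤ B n)
    (g : ℕ → ℂ → ℂ)
    (hg : ∀ n z, g n z = z + 2 * Real.pi * Complex.I * (q n : ℂ) * z *
      ((ε n : ℂ) - z ^ q n) * (1 + η n + ((ε n : ℂ) - z ^ q n) * k n z)) :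
    ∃ N : ℕ, ∀ n ≥ N, ∀ h : ℂ → ℂ,
      DifferentiableOn ℂ h (QnSet (q n) (ε n)) →
      (∀ Z ∈ QnSet (q n) (ε n), h Z ^ q n =
        (ε n : ℂ) /
          (1 - Complex.exp (-(2 * Real.pi * Complex.I * ((q n : ℝ) ^ 2 * ε n : ℝ) * Z)))) →
      ∀ Z ∈ QnSector (q n) (ε n) (1 / (2 * Real.pi * (q n : ℝ) ^ 2 * r ^ q n)),
        h Z ∈ Metric.ball (0 : ℂ) r0 ∧
        ∃ W ∈ Metric.ball Z (1 / (2 * Real.pi * (q n : ℝ) ^ 2 * r' ^ q n)),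
          h W = g n (h Z) ∧ ‖W - Z - 1‖ < 1 / 4 := by
  have hr : 0 < r := lt_of_le_of_lt h0 h1
  have hr1 : r < 1 := lt_trans (lt_trans h2 h3) h4
  set ι : ℝ := (invA + r)/2 with hι_def
  have hι0 : 0 < ι := by rw [hι_def]; linarith
  have hιr : ι < r := by rw [hι_def]; linarith
  set P : ℝ := (1 + 1/r)/2 with hP_def
  have hP1 : 1 < P := by
    rw [hP_def]
    have : 1 < 1/r := by rw [lt_div_iff₀ hr]; linarith
    linarith
  have hPr : P * r < 1 := by
    rw [hP_def]
    field_simp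
    nlinarith
  have hPι : P * ι < 1 := by
    nlinarith
  -- eventually ε n ≤ ι ^ q n
  have hev_eps : ∀ᶠ n in atTop, ε n ≤ ι ^ (q n) := by
    have h1' : ∀ᶠ n in atTop, (ε n)^(1/(q n:ℝ)) < ι := by
      apply hεlim.eventually_lt_const
      rw [hι_def]; linarith
    filter_upwards [h1'] with n hn
    have hq0 : ((q n : ℝ)) ≠ 0 := by
      have := hq n; positivity
    have hid : ((ε n)^(1/(q n:ℝ)))^(q n) = ε n := by
      rw [← Real.rpow_natCast ((ε n)^(1/(q n:ℝ))) (q n), ← Real.rpow_mul (hε n).le,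
        one_div, inv_mul_cancel₀ hq0, Real.rpow_one]
    calc ε n = ((ε n)^(1/(q n:ℝ)))^(q n) := hid.symm
      _ ≤ ι ^ (q n) := pow_le_pow_left₀ (Real.rpow_nonneg (hε n).le _) hn.le _
  -- eventually B n ≤ P ^ q n
  have hev_B : ∀ᶠ n in atTop, B n ≤ P ^ (q n) := by
    have hlt : Filter.limsup (fun n => ENNReal.ofReal ((B n) ^ (1 / (q n : ℝ)))) Filter.atTop
        < ENNReal.ofReal P := by
      apply lt_of_le_of_lt hBlim
      rw [← ENNReal.ofReal_one]
      exact (ENNReal.ofReal_lt_ofReal_iff (by linarith)).mpr hP1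
    have h1' := Filter.eventually_lt_of_limsup_lt hlt
    filter_upwards [h1'] with n hn
    have hn' : (B n)^(1/(q n:ℝ)) < P := by
      have := (ENNReal.ofReal_lt_ofReal_iff_of_nonneg
        (Real.rpow_nonneg (hB n).le _)).mp hn
      exact this
    have hq0 : ((q n : ℝ)) ≠ 0 := by
      have := hq n; positivity
    have hid : ((B n)^(1/(q n:ℝ)))^(q n) = B n := by
      rw [← Real.rpow_natCast ((B n)^(1/(q n:ℝ))) (q n), ← Real.rpow_mul (hB n).le,
        one_div, inv_mul_cancel₀ hq0, Real.rpow_one]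
    calc B n = ((B n)^(1/(q n:ℝ)))^(q n) := hid.symm
      _ ≤ P ^ (q n) := pow_le_pow_left₀ (Real.rpow_nonneg (hB n).le _) hn'.le _
  -- master smallness
  have master : ∀ x : ℝ, 0 ≤ x → x < 1 → ∀ δ : ℝ, 0 < δ →
      ∀ᶠ n in atTop, ((q n : ℝ))^2 * x^(q n) < δ := by
    intro x hx0 hx1 δ hδ
    have h1' : Tendsto (fun j : ℕ => (j:ℝ)^2 * x^j) atTop (nhds 0) :=
      tendsto_pow_const_mul_const_pow_of_lt_one 2 hx0 hx1
    have h2' : Tendsto (fun n => ((q n : ℝ))^2 * x^(q n)) atTop (nhds 0) :=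
      h1'.comp hqtop
    exact h2'.eventually_lt_const hδ
  have hev1 := master (ι/r) (le_of_lt (div_pos hι0 hr)) (by rw [div_lt_one hr]; exact hιr) (1/10) (by norm_num)
  have hev2 := master (r/r0) (div_nonneg hr.le (by linarith))
    (by rw [div_lt_one (by linarith)]; linarith) (1/16) (by norm_num)
  have hev3 := master r hr.le hr1 (1/100000) (by norm_num)
  have hev5a := master (P*ι) (mul_nonneg (by linarith) hι0.le) hPι (1/1000) (by norm_num)
  have hev5b := master (P*r) (mul_nonneg (by linarith) hr.le) hPr (1/1000) (by norm_num)
  have hev7 := master r' (by linarith) (by linarith) (1/100) (by norm_num)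
  have hall : ∀ᶠ n in atTop,
      (ε n ≤ r^(q n)/10) ∧ (16*r^(q n) ≤ r0^(q n)) ∧ ((q n:ℝ)^2*r^(q n) ≤ 1/100000) ∧
      (B n * ε n ≤ 1/1000) ∧ (B n * r^(q n) ≤ 1/1000) ∧ ((q n:ℝ)^2*r'^(q n) ≤ 1/100) := by
    filter_upwards [hev_eps, hev_B, hev1, hev2, hev3, hev5a, hev5b, hev7] with n
      hεn hBn h1n h2n h3n h5an h5bn h7n
    have hm1 : (1:ℝ) ≤ (q n : ℝ) := by exact_mod_cast hq n
    have hm2 : (1:ℝ) ≤ (q n : ℝ)^2 := by nlinarith only [hm1]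
    have hrm : (0:ℝ) < r^(q n) := pow_pos hr _
    have hιm : (0:ℝ) < ι^(q n) := pow_pos hι0 _
    have hPm : (0:ℝ) < P^(q n) := pow_pos (by linarith) _
    have hdiv1 : (ι/r)^(q n) = ι^(q n)/r^(q n) := div_pow ι r (q n)
    have hdiv2 : (r/r0)^(q n) = r^(q n)/r0^(q n) := div_pow r r0 (q n)
    have hmul1 : (P*ι)^(q n) = P^(q n)*ι^(q n) := mul_pow P ι (q n)
    have hmul2 : (P*r)^(q n) = P^(q n)*r^(q n) := mul_pow P r (q n)
    have hr0m : (0:ℝ) < r0^(q n) := pow_pos (by linarith) _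
    refine ⟨?_, ?_, ?_, ?_, ?_, ?_⟩
    · -- ε ≤ r^m/10
      have hx : ι^(q n)/r^(q n) < 1/10 := by
        rw [← hdiv1]
        nlinarith only [h1n, hm2, pow_nonneg (div_nonneg hι0.le hr.le) (q n)]
      have : ι^(q n) < r^(q n)/10 := by
        rw [div_lt_iff₀ hrm] at hx
        linarith only [hx]
      linarith only [hεn, this]
    · -- 16 r^m ≤ r0^m
      have hx : r^(q n)/r0^(q n) < 1/16 := by
        rw [← hdiv2]
        nlinarith only [h2n, hm2, pow_nonneg (div_nonneg hr.le (by linarith : (0:ℝ) ≤ r0)) (q n)]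
      rw [div_lt_iff₀ hr0m] at hx
      linarith only [hx]
    · -- m² r^m small
      linarith only [h3n]
    · -- B ε
      have hx : (P*ι)^(q n) < 1/1000 := by
        nlinarith only [h5an, hm2, pow_nonneg (mul_nonneg (by linarith : (0:ℝ) ≤ P) hι0.le) (q n)]
      rw [hmul1] at hx
      have hy : B n * ε n ≤ P^(q n) * ι^(q n) := by
        apply mul_le_mul hBn hεn (hε n).le hPm.le
      linarith only [hx, hy]
    · -- B r^m
      have hx : (P*r)^(q n) < 1/1000 := by
        nlinarith only [h5bn, hm2, pow_nonneg (mul_nonneg (by linarith : (0:ℝ) ≤ P) hr.le) (q n)]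
      rw [hmul2] at hx
      have hy : B n * r^(q n) ≤ P^(q n) * r^(q n) := by
        apply mul_le_mul_of_nonneg_right hBn hrm.le
      linarith only [hx, hy]
    · -- m² r'^m small
      linarith only [h7n]
  obtain ⟨N, hN⟩ := Filter.eventually_atTop.mp hall
  refine ⟨N, fun n hn h hdiff heq Z hZ => ?_⟩
  obtain ⟨e1, e2, e3, e5a, e5b, e7⟩ := hN n hn
  exact key r r' r0 (q n) (ε n) (B n) (η n) (k n) (g n)
    hr h2 h3 h4 (hq n) (hε n) (hB n)
    e1 e2 e3 e5a e5b e7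
    (hη n) (hkbd n) (hg n) h hdiff heq Z hZ
end
end
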